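/- arXiv:2505.10964 — 3 statements merged into one kernel-verified Lean document; each statement's English description precedes it below -/
import Mathlib

section
/- Let D₁ and D₂ be bounded proper subdomains of ℂ, and let f(z) = (az + b)/(cz + d) with a, b, c, d ∈ ℂ and ad − bc ≠ 0 be a Möbius transformation mapping D₁ onto D₂ (with the pole of f outside the closure of D₁). Then for all z₁, z₂ ∈ D₁, (1/4)·m_{D₁}(z₁, z₂) ≤ m_{D₂}(f(z₁), f(z₂)) ≤ 4·m_{D₁}(z₁, z₂). -/
open Metric Set MeasureTheory

variable {E : Type*} [NormedAddCommGroup E] [NormedSpace ℝ E]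

/-- δ_D(z): the Euclidean distance from `z` to the boundary `∂D`. -/
noncomputable def bdist (D : Set E) (z : E) : ℝ := Metric.infDist z (frontier D)

/-- The m-density `m_D(z) = d(D) / (δ_D(z)·(d(D) − δ_D(z)))`. -/
noncomputable def mDensity (D : Set E) (z : E) : ℝ :=
  Metric.diam D / (bdist D z * (Metric.diam D - bdist D z))

/-- A rectifiable path in `D` from `x` to `y`, modeled as a Lipschitz map on `[0,1]`. -/
def IsRectPathIn (D : Set E) (x y : E) (γ : ℝ → E) : Prop :=
  (∃ K : NNReal, LipschitzWith K γ) ∧ γ 0 = x ∧ γ 1 = y ∧ ∀ t ∈ Set.Icc (0:ℝ) 1, γ t ∈ D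

/-- The line integral `∫_γ ρ(z) |dz|` of a density `ρ` along a path `γ`. -/
noncomputable def pathIntegral (ρ : E → ℝ) (γ : ℝ → E) : ℝ :=
  ∫ t in (0:ℝ)..1, ρ (γ t) * ‖deriv γ t‖

/-- `inf_γ ∫_γ ρ(z)|dz|` over all rectifiable paths `γ` joining `x` and `y` in `D`. -/
noncomputable def pathDist (ρ : E → ℝ) (D : Set E) (x y : E) : ℝ :=
  sInf (pathIntegral ρ '' {γ | IsRectPathIn D x y γ})

/-- The metric `m_D`. -/
noncomputable def mDist (D : Set E) (x y : E) : ℝ := pathDist (mDensity D) D x y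

/-- The quasihyperbolic metric `k_D`. -/
noncomputable def kDist (D : Set E) (x y : E) : ℝ :=
  pathDist (fun z => 1 / bdist D z) D x y

section MoebiusProof

lemma frontier_nonempty_of_proper {D : Set ℂ} (hne : D.Nonempty) (hproper : D ≠ univ) :
    (frontier D).Nonempty := by
  rw [nonempty_iff_ne_empty]
  intro h
  rcases isClopen_iff.mp (isClopen_iff_frontier_eq_empty.mpr h) with h' | h'
  · exact hne.ne_empty h'
  · exact hproper h'

lemma bdist_pos {D : Set ℂ} (hD : IsOpen D) (hproper : D ≠ univ) {z : ℂ} (hz : z ∈ D) :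
    0 < bdist D z := by
  have hfr := frontier_nonempty_of_proper ⟨z, hz⟩ hproper
  have hznf : z ∉ frontier D := by
    rw [hD.frontier_eq]
    exact fun h => h.2 hz
  exact (isClosed_frontier.notMem_iff_infDist_pos hfr).mp hznf

lemma ball_bdist_subset {D : Set ℂ} (hD : IsOpen D) (hproper : D ≠ univ) {z : ℂ}
    (hz : z ∈ D) : ball z (bdist D z) ⊆ D := by
  have hsub : ball z (bdist D z) ⊆ interior D ∪ (closure D)ᶜ := by
    intro x hx
    have hxf : x ∉ frontier D := by
      intro hxf
      have h1 : bdist D z ≤ dist z x := Metric.infDist_le_dist_of_mem hxf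
      rw [mem_ball, dist_comm] at hx
      linarith
    by_cases hxc : x ∈ closure D
    · left
      by_contra hxint
      rw [hD.interior_eq] at hxint
      exact hxf ⟨hxc, fun hi => hxint (interior_subset hi)⟩
    · right; exact hxc
  have hcon : IsPreconnected (ball z (bdist D z)) := (convex_ball z _).isPreconnected
  have := hcon.subset_left_of_subset_union isOpen_interior isClosed_closure.isOpen_compl
    (disjoint_compl_right.mono_left (interior_subset.trans subset_closure)) hsub
    ⟨z, mem_ball_self (bdist_pos hD hproper hz), by rw [hD.interior_eq]; exact hz⟩
  exact this.trans interior_subset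

lemma two_bdist_le_diam {D : Set ℂ} (hD : IsOpen D) (hbdd : Bornology.IsBounded D)
    (hproper : D ≠ univ) {z : ℂ} (hz : z ∈ D) : 2 * bdist D z ≤ Metric.diam D := by
  have hr := bdist_pos hD hproper hz
  have hball := ball_bdist_subset hD hproper hz
  refine le_of_forall_pos_le_add fun ε hε => ?_
  set s : ℝ := max 0 (bdist D z - ε / 2) with hs
  have hs0 : 0 ≤ s := le_max_left _ _
  have hslt : s < bdist D z := by
    rcases max_cases 0 (bdist D z - ε / 2) with ⟨h1, h2⟩ | ⟨h1, h2⟩ <;> rw [hs, h1] <;> linarith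
  have h1 : z + s ∈ D := hball (by simp [mem_ball, dist_eq_norm]; rw [abs_of_nonneg hs0]; exact hslt)
  have h2 : z - s ∈ D := hball (by simp [mem_ball, dist_eq_norm]; rw [abs_of_nonneg hs0]; exact hslt)
  have hdist : dist (z + (s:ℂ)) (z - s) = 2 * s := by
    rw [dist_eq_norm]
    have : z + (s:ℂ) - (z - s) = (2:ℝ) * s := by push_cast; ring
    rw [this]
    have h2s : ((2:ℝ) * s : ℝ) = ((2*s : ℝ) : ℂ) := by push_cast; ring
    rw [show ((2:ℝ):ℂ) * (s:ℂ) = ((2*s:ℝ):ℂ) by push_cast; ring, Complex.norm_real,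
      Real.norm_eq_abs, abs_of_nonneg (by linarith)]
  have := Metric.dist_le_diam_of_mem hbdd h1 h2
  rw [hdist] at this
  rcases max_cases 0 (bdist D z - ε / 2) with ⟨hh1, hh2⟩ | ⟨hh1, hh2⟩ <;> rw [hs, hh1] at this <;> linarith

lemma mDensity_bounds {D : Set ℂ} (hD : IsOpen D) (hbdd : Bornology.IsBounded D)
    (hproper : D ≠ univ) {z : ℂ} (hz : z ∈ D) :
    1 / bdist D z ≤ mDensity D z ∧ mDensity D z ≤ 2 / bdist D z := by
  have hr := bdist_pos hD hproper hz
  have h2 := two_bdist_le_diam hD hbdd hproper hz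
  have hdr : 0 < Metric.diam D - bdist D z := by linarith
  constructor
  · rw [mDensity, div_le_div_iff₀ hr (by positivity)]
    nlinarith
  · rw [mDensity, div_le_div_iff₀ (by positivity) hr]
    nlinarith

section Moebius

variable {a b c d : ℂ} {f : ℂ → ℂ}

lemma moebius_sub (hf : ∀ z : ℂ, f z = (a * z + b) / (c * z + d)) {z w : ℂ}
    (hz : c * z + d ≠ 0) (hw : c * w + d ≠ 0) :
    f w - f z = ((a * d - b * c) * (w - z)) / ((c * w + d) * (c * z + d)) := by
  rw [hf, hf]
  rw [div_sub_div _ _ hw hz]; congr 1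
  ring

lemma moebius_dist (hf : ∀ z : ℂ, f z = (a * z + b) / (c * z + d)) {z w : ℂ}
    (hz : c * z + d ≠ 0) (hw : c * w + d ≠ 0) :
    dist (f w) (f z) = ‖a * d - b * c‖ * dist w z / (‖c * w + d‖ * ‖c * z + d‖) := by
  rw [dist_eq_norm, moebius_sub hf hz hw, norm_div, norm_mul, norm_mul, dist_eq_norm]

lemma moebius_hasDerivAt (hf : ∀ z : ℂ, f z = (a * z + b) / (c * z + d)) {z : ℂ}
    (hz : c * z + d ≠ 0) :
    HasDerivAt f ((a * d - b * c) / (c * z + d) ^ 2) z := by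
  have h1 : HasDerivAt (fun w : ℂ => a * w + b) a z := by
    simpa using ((hasDerivAt_id z).const_mul a).add_const b
  have h2 : HasDerivAt (fun w : ℂ => c * w + d) c z := by
    simpa using ((hasDerivAt_id z).const_mul c).add_const d
  have h3 := h1.div h2 hz
  have h4 : (fun w : ℂ => (a * w + b) / (c * w + d)) = f := funext fun w => (hf w).symm
  rw [show ((fun w : ℂ => a * w + b) / fun w : ℂ => c * w + d) = f from h4] at h3
  refine h3.congr_deriv ?_
  congr 1
  ring

end Moebius

section Distortion

variable {D₁ D₂ : Set ℂ} {a b c d : ℂ} {f : ℂ → ℂ}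

lemma moebius_continuousOn (hf : ∀ z : ℂ, f z = (a * z + b) / (c * z + d))
    (hpole : ∀ z ∈ closure D₁, c * z + d ≠ 0) : ContinuousOn f (closure D₁) :=
  fun z hz => ((moebius_hasDerivAt hf (hpole z hz)).continuousAt).continuousWithinAt

lemma closure_image_subset (hD₁bdd : Bornology.IsBounded D₁)
    (hf : ∀ z : ℂ, f z = (a * z + b) / (c * z + d))
    (hpole : ∀ z ∈ closure D₁, c * z + d ≠ 0) (hmaps : f '' D₁ = D₂) :
    closure D₂ ⊆ f '' closure D₁ := by
  have hcomp : IsCompact (closure D₁) := hD₁bdd.isCompact_closure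
  have himg : IsCompact (f '' closure D₁) :=
    hcomp.image_of_continuousOn (moebius_continuousOn hf hpole)
  rw [← hmaps]
  exact closure_minimal (image_mono subset_closure) himg.isClosed

lemma frontier_image_subset (hD₁bdd : Bornology.IsBounded D₁) (hD₂open : IsOpen D₂)
    (hf : ∀ z : ℂ, f z = (a * z + b) / (c * z + d))
    (hpole : ∀ z ∈ closure D₁, c * z + d ≠ 0) (hmaps : f '' D₁ = D₂) :
    frontier D₂ ⊆ f '' frontier D₁ := by
  intro w hw
  obtain ⟨ζ, hζ, hfζ⟩ := closure_image_subset hD₁bdd hf hpole hmaps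
    (frontier_subset_closure hw)
  have hζn : ζ ∉ D₁ := by
    intro hζD
    have : w ∈ D₂ := by rw [← hmaps]; exact ⟨ζ, hζD, hfζ⟩
    rw [hD₂open.frontier_eq] at hw
    exact hw.2 this
  exact ⟨ζ, by rw [frontier_eq_closure_inter_closure]; exact ⟨hζ, subset_closure hζn⟩, hfζ⟩

/-- Key distortion estimate for the distance from `f z` to the image of a boundary point. -/
lemma moebius_frontier_dist (hD₁open : IsOpen D₁) (hD₁proper : D₁ ≠ univ)
    (habcd : a * d - b * c ≠ 0)
    (hf : ∀ z : ℂ, f z = (a * z + b) / (c * z + d))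
    (hpole : ∀ z ∈ closure D₁, c * z + d ≠ 0)
    {z ζ : ℂ} (hz : z ∈ D₁) (hζ : ζ ∈ frontier D₁) :
    (1 / 2) * (‖a * d - b * c‖ / ‖c * z + d‖ ^ 2) * bdist D₁ z ≤ dist (f ζ) (f z) := by
  set T := ‖a * d - b * c‖ with hT
  set r := bdist D₁ z with hrdef
  set B := ‖c * z + d‖ with hB
  have hzc : c * z + d ≠ 0 := hpole z (subset_closure hz)
  have hζc : c * ζ + d ≠ 0 := hpole ζ (frontier_subset_closure hζ)
  have hTpos : 0 < T := norm_pos_iff.mpr habcd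
  have hBpos : 0 < B := norm_pos_iff.mpr hzc
  have hr : 0 < r := bdist_pos hD₁open hD₁proper hz
  have hrs : r ≤ dist ζ z := by
    rw [hrdef]
    rw [show dist ζ z = dist z ζ from dist_comm ζ z]
    exact Metric.infDist_le_dist_of_mem hζ
  set s := dist ζ z with hsdef
  have hspos : 0 < s := lt_of_lt_of_le hr hrs
  have hBζ : ‖c * ζ + d‖ ≤ ‖c‖ * s + B := by
    have : c * ζ + d = c * (ζ - z) + (c * z + d) := by ring
    rw [this]
    refine (norm_add_le _ _).trans ?_
    rw [norm_mul, hsdef, dist_eq_norm]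
  have hcr : ‖c‖ * r ≤ B := by
    by_cases hc : c = 0
    · simp [hc]; positivity
    · set p : ℂ := -d / c with hp
      have hpnot : p ∉ closure D₁ := by
        intro hpcl
        apply hpole p hpcl
        rw [hp]
        field_simp
        ring
      have hpball : p ∉ ball z r := fun hpb =>
        hpnot (subset_closure (ball_bdist_subset hD₁open hD₁proper hz hpb))
      have hdzp : r ≤ dist p z := not_lt.mp (fun hlt => hpball (by rwa [mem_ball]))
      have : B = ‖c‖ * dist p z := by
        rw [hB, dist_eq_norm, ← norm_mul, ← norm_neg (c * (p - z))]
        congr 1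
        rw [hp]
        field_simp
        ring
      rw [this]
      exact mul_le_mul_of_nonneg_left hdzp (norm_nonneg c)
  have hdist : dist (f ζ) (f z) = T * s / (‖c * ζ + d‖ * B) :=
    moebius_dist hf hzc hζc
  rw [hdist]
  have hBζpos : 0 < ‖c * ζ + d‖ := norm_pos_iff.mpr hζc
  have step1 : T * s / ((‖c‖ * s + B) * B) ≤ T * s / (‖c * ζ + d‖ * B) := by
    apply div_le_div_of_nonneg_left (by positivity) (by positivity)
    exact mul_le_mul_of_nonneg_right hBζ hBpos.le
  refine le_trans ?_ step1
  rw [show (1:ℝ) / 2 * (T / B ^ 2) * r = T * r / (2 * B ^ 2) by ring,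
    div_le_div_iff₀ (by positivity) (by positivity)]
  have hcs : ‖c‖ * r * s ≤ B * s := mul_le_mul_of_nonneg_right hcr hspos.le
  have hrB : r * B ≤ s * B := mul_le_mul_of_nonneg_right hrs hBpos.le
  have h1 : ‖c‖ * r * s * B ≤ B * s * B := mul_le_mul_of_nonneg_right hcs hBpos.le
  have h2 : r * B * B ≤ s * B * B := mul_le_mul_of_nonneg_right hrB hBpos.le
  nlinarith [hTpos.le, mul_nonneg (mul_nonneg hTpos.le hspos.le) (sq_nonneg B)]

end Distortion

section Density

variable {D₁ D₂ : Set ℂ} {a b c d : ℂ} {f : ℂ → ℂ}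

lemma bdist_image_ge (hD₁open : IsOpen D₁) (hD₁bdd : Bornology.IsBounded D₁)
    (hD₁proper : D₁ ≠ univ) (hD₂open : IsOpen D₂) (hD₂bdd : Bornology.IsBounded D₂)
    (hD₂proper : D₂ ≠ univ) (habcd : a * d - b * c ≠ 0)
    (hf : ∀ z : ℂ, f z = (a * z + b) / (c * z + d))
    (hpole : ∀ z ∈ closure D₁, c * z + d ≠ 0) (hmaps : f '' D₁ = D₂)
    {z : ℂ} (hz : z ∈ D₁) :
    (1 / 2) * (‖a * d - b * c‖ / ‖c * z + d‖ ^ 2) * bdist D₁ z ≤ bdist D₂ (f z) := by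
  have hfz : f z ∈ D₂ := by rw [← hmaps]; exact ⟨z, hz, rfl⟩
  have hfr₂ : (frontier D₂).Nonempty := frontier_nonempty_of_proper ⟨f z, hfz⟩ hD₂proper
  have : Nonempty (frontier D₂) := hfr₂.to_subtype
  conv_rhs => rw [bdist, Metric.infDist_eq_iInf]
  apply le_ciInf
  intro w
  obtain ⟨ζ, hζ, hfζ⟩ := frontier_image_subset hD₁bdd hD₂open hf hpole hmaps w.2
  rw [← hfζ, dist_comm]
  exact moebius_frontier_dist hD₁open hD₁proper habcd hf hpole hz hζ

/-- Pointwise density estimate. -/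
lemma density_transfer (hD₁open : IsOpen D₁) (hD₁bdd : Bornology.IsBounded D₁)
    (hD₁proper : D₁ ≠ univ) (hD₂open : IsOpen D₂) (hD₂bdd : Bornology.IsBounded D₂)
    (hD₂proper : D₂ ≠ univ) (habcd : a * d - b * c ≠ 0)
    (hf : ∀ z : ℂ, f z = (a * z + b) / (c * z + d))
    (hpole : ∀ z ∈ closure D₁, c * z + d ≠ 0) (hmaps : f '' D₁ = D₂)
    {z : ℂ} (hz : z ∈ D₁) :
    mDensity D₂ (f z) * (‖a * d - b * c‖ / ‖c * z + d‖ ^ 2) ≤ 4 * mDensity D₁ z := by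
  have hfz : f z ∈ D₂ := by rw [← hmaps]; exact ⟨z, hz, rfl⟩
  set T := ‖a * d - b * c‖
  set B := ‖c * z + d‖
  have hTpos : 0 < T := norm_pos_iff.mpr habcd
  have hBpos : 0 < B := norm_pos_iff.mpr (hpole z (subset_closure hz))
  set F := T / B ^ 2 with hF
  have hFpos : 0 < F := by positivity
  have hr₁ : 0 < bdist D₁ z := bdist_pos hD₁open hD₁proper hz
  have hδ₂ := bdist_image_ge hD₁open hD₁bdd hD₁proper hD₂open hD₂bdd hD₂proper habcd
    hf hpole hmaps hz
  have hr₂ : 0 < bdist D₂ (f z) := lt_of_lt_of_le (by positivity) hδ₂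
  have hm₂ := (mDensity_bounds hD₂open hD₂bdd hD₂proper hfz).2
  have hm₁ := (mDensity_bounds hD₁open hD₁bdd hD₁proper hz).1
  have step1 : mDensity D₂ (f z) * F ≤ (2 / bdist D₂ (f z)) * F :=
    mul_le_mul_of_nonneg_right hm₂ hFpos.le
  have step2 : (2 / bdist D₂ (f z)) * F ≤ (2 / ((1 / 2) * F * bdist D₁ z)) * F := by
    apply mul_le_mul_of_nonneg_right _ hFpos.le
    apply div_le_div_of_nonneg_left (by norm_num) (by positivity) hδ₂
  have step3 : (2 / ((1 / 2) * F * bdist D₁ z)) * F = 4 / bdist D₁ z := by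
    field_simp
    ring
  have step4 : 4 / bdist D₁ z ≤ 4 * mDensity D₁ z := by
    have := mul_le_mul_of_nonneg_left hm₁ (by norm_num : (0:ℝ) ≤ 4)
    calc 4 / bdist D₁ z = 4 * (1 / bdist D₁ z) := by ring
    _ ≤ 4 * mDensity D₁ z := this
  linarith [step1, step2, step3 ▸ step2]

end Density

section PathBasics

lemma norm_deriv_le_lip {γ : ℝ → ℂ} {K : NNReal} (h : LipschitzWith K γ) (t : ℝ) :
    ‖deriv γ t‖ ≤ K := by
  have h1 : ‖fderiv ℝ γ t‖ ≤ K := norm_fderiv_le_of_lipschitz ℝ h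
  calc ‖deriv γ t‖ = ‖(fderiv ℝ γ t) 1‖ := by rw [fderiv_apply_one_eq_deriv]
  _ ≤ ‖fderiv ℝ γ t‖ * ‖(1:ℝ)‖ := (fderiv ℝ γ t).le_opNorm 1
  _ ≤ K := by simpa using h1

lemma mDensity_measurable (D : Set ℂ) : Measurable (mDensity D) := by
  have h1 : Continuous fun z : ℂ => bdist D z := continuous_infDist_pt _
  exact measurable_const.div ((h1.measurable).mul (measurable_const.sub h1.measurable))

lemma mDensity_continuousOn {D : Set ℂ} (hD : IsOpen D) (hbdd : Bornology.IsBounded D)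
    (hproper : D ≠ univ) : ContinuousOn (mDensity D) D := by
  intro z hz
  have hr := bdist_pos hD hproper hz
  have h2 := two_bdist_le_diam hD hbdd hproper hz
  have h1 : Continuous fun w : ℂ => bdist D w := continuous_infDist_pt _
  apply ContinuousAt.continuousWithinAt
  apply ContinuousAt.div continuousAt_const
  · exact (h1.continuousAt).mul (continuousAt_const.sub h1.continuousAt)
  · have : 0 < bdist D z * (Metric.diam D - bdist D z) := by nlinarith
    exact ne_of_gt this

lemma pathIntegral_nonneg {D : Set ℂ} (hD : IsOpen D) (hbdd : Bornology.IsBounded D)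
    (hproper : D ≠ univ) {x y : ℂ} {γ : ℝ → ℂ} (hγ : IsRectPathIn D x y γ) :
    0 ≤ pathIntegral (mDensity D) γ := by
  apply intervalIntegral.integral_nonneg (by norm_num)
  intro u hu
  have hu' := hγ.2.2.2 u hu
  have hr := bdist_pos hD hproper hu'
  have h2 := two_bdist_le_diam hD hbdd hproper hu'
  have : 0 ≤ mDensity D (γ u) := by
    rw [mDensity]
    apply div_nonneg Metric.diam_nonneg
    nlinarith
  exact mul_nonneg this (norm_nonneg _)

end PathBasics

section Transfer

lemma qc_lipschitz : LipschitzWith 1 (fun t : ℝ => max (min t 1) 0) := by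
  simpa using (LipschitzWith.id.min_const (1:ℝ)).max_const 0

variable {D₁ D₂ : Set ℂ} {a b c d : ℂ} {f : ℂ → ℂ}

lemma path_transfer (hD₁open : IsOpen D₁) (hD₁bdd : Bornology.IsBounded D₁)
    (hD₁proper : D₁ ≠ univ) (hD₂open : IsOpen D₂) (hD₂bdd : Bornology.IsBounded D₂)
    (hD₂proper : D₂ ≠ univ) (habcd : a * d - b * c ≠ 0)
    (hf : ∀ z : ℂ, f z = (a * z + b) / (c * z + d))
    (hpole : ∀ z ∈ closure D₁, c * z + d ≠ 0) (hmaps : f '' D₁ = D₂)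
    {z₁ z₂ : ℂ} (hz₁ : z₁ ∈ D₁)
    {γ : ℝ → ℂ} (hγ : IsRectPathIn D₁ z₁ z₂ γ) :
    ∃ γ' : ℝ → ℂ, IsRectPathIn D₂ (f z₁) (f z₂) γ' ∧
      pathIntegral (mDensity D₂) γ' ≤ 4 * pathIntegral (mDensity D₁) γ := by
  obtain ⟨⟨K, hK⟩, hγ0, hγ1, hγD⟩ := hγ
  set qc : ℝ → ℝ := fun t => max (min t 1) 0 with hqc
  have hqlip : LipschitzWith 1 qc := qc_lipschitz
  have hq01 : ∀ t, qc t ∈ Icc (0:ℝ) 1 := fun t =>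
    ⟨le_max_right _ _, max_le (min_le_right _ _) zero_le_one⟩
  have hqid : ∀ t ∈ Icc (0:ℝ) 1, qc t = t := by
    intro t ht
    simp only [hqc]
    rw [min_eq_left ht.2, max_eq_left ht.1]
  set γ' : ℝ → ℂ := fun t => f (γ (qc t)) with hγ'def
  -- a Lipschitz bound for f on the closure of D₁
  have hcomp : IsCompact (closure D₁) := hD₁bdd.isCompact_closure
  have hclne : (closure D₁).Nonempty := ⟨z₁, subset_closure hz₁⟩
  obtain ⟨z₀, hz₀, hmin⟩ := hcomp.exists_isMinOn hclne
    ((continuous_norm.comp (by continuity : Continuous fun z : ℂ => c * z + d)).continuousOn)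
  set β := ‖c * z₀ + d‖ with hβ
  have hβpos : 0 < β := norm_pos_iff.mpr (hpole z₀ hz₀)
  set T := ‖a * d - b * c‖ with hT
  have hTpos : 0 < T := norm_pos_iff.mpr habcd
  set L := T / β ^ 2 with hL
  have hLpos : 0 < L := by positivity
  have hflip : ∀ x ∈ closure D₁, ∀ y ∈ closure D₁, dist (f x) (f y) ≤ L * dist x y := by
    intro x hx y hy
    rw [moebius_dist hf (hpole y hy) (hpole x hx)]
    have h1 : β ≤ ‖c * x + d‖ := hmin hx
    have h2 : β ≤ ‖c * y + d‖ := hmin hy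
    have hstep : T * dist x y / (‖c * x + d‖ * ‖c * y + d‖) ≤ T * dist x y / (β * β) := by
      apply div_le_div_of_nonneg_left (by positivity) (by positivity)
      exact mul_le_mul h1 h2 hβpos.le (norm_nonneg _)
    calc T * dist x y / (‖c * x + d‖ * ‖c * y + d‖) ≤ T * dist x y / (β * β) := hstep
      _ = L * dist x y := by rw [hL]; ring
  have hmem : ∀ t : ℝ, γ (qc t) ∈ D₁ := fun t => hγD _ (hq01 t)
  have hγ'lip : ∀ s t : ℝ, dist (γ' s) (γ' t) ≤ L * K * dist s t := by
    intro s t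
    have h1 : dist (γ' s) (γ' t) ≤ L * dist (γ (qc s)) (γ (qc t)) :=
      hflip _ (subset_closure (hmem s)) _ (subset_closure (hmem t))
    have h2 : dist (γ (qc s)) (γ (qc t)) ≤ K * dist (qc s) (qc t) := hK.dist_le_mul _ _
    have h3 : dist (qc s) (qc t) ≤ dist s t := by
      simpa using hqlip.dist_le_mul s t
    calc dist (γ' s) (γ' t) ≤ L * dist (γ (qc s)) (γ (qc t)) := h1
      _ ≤ L * (K * dist (qc s) (qc t)) := by
          exact mul_le_mul_of_nonneg_left h2 hLpos.le
      _ ≤ L * K * dist s t := by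
          rw [mul_assoc]
          apply mul_le_mul_of_nonneg_left _ hLpos.le
          exact mul_le_mul_of_nonneg_left h3 (K.coe_nonneg)
  set K' : NNReal := L.toNNReal * K with hK'
  have hK'coe : (K' : ℝ) = L * K := by
    rw [hK']
    push_cast
    rw [Real.coe_toNNReal _ hLpos.le]
  have hγ'lipW : LipschitzWith K' γ' := by
    rw [lipschitzWith_iff_dist_le_mul]
    intro s t
    rw [hK'coe]
    exact hγ'lip s t
  have hq0 : qc 0 = 0 := hqid 0 ⟨le_refl _, zero_le_one⟩
  have hq1 : qc 1 = 1 := hqid 1 ⟨zero_le_one, le_refl _⟩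
  have hpath : IsRectPathIn D₂ (f z₁) (f z₂) γ' := by
    refine ⟨⟨K', hγ'lipW⟩, ?_, ?_, ?_⟩
    · show f (γ (qc 0)) = f z₁; rw [hq0, hγ0]
    · show f (γ (qc 1)) = f z₂; rw [hq1, hγ1]
    · intro t ht
      show f (γ (qc t)) ∈ D₂
      rw [← hmaps]
      exact ⟨_, hmem t, rfl⟩
  refine ⟨γ', hpath, ?_⟩
  -- now the integral estimate
  set g1 : ℝ → ℝ := fun t => mDensity D₁ (γ t) * ‖deriv γ t‖ with hg1
  set g2 : ℝ → ℝ := fun t => mDensity D₂ (γ' t) * ‖deriv γ' t‖ with hg2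
  have hγcont : Continuous γ := hK.continuous
  have hγ'cont : Continuous γ' := hγ'lipW.continuous
  obtain ⟨M₁, hM₁⟩ := isCompact_Icc.exists_bound_of_continuousOn
    ((mDensity_continuousOn hD₁open hD₁bdd hD₁proper).comp hγcont.continuousOn
      (fun t ht => hγD t ht))
  obtain ⟨M₂, hM₂⟩ := isCompact_Icc.exists_bound_of_continuousOn
    ((mDensity_continuousOn hD₂open hD₂bdd hD₂proper).comp hγ'cont.continuousOn
      (fun t ht => hpath.2.2.2 t ht))
  have hM₁0 : 0 ≤ M₁ := le_trans (norm_nonneg _) (hM₁ 0 ⟨le_refl _, zero_le_one⟩)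
  have hM₂0 : 0 ≤ M₂ := le_trans (norm_nonneg _) (hM₂ 0 ⟨le_refl _, zero_le_one⟩)
  have hmeas1 : AEStronglyMeasurable g1 (volume.restrict (Ioc (0:ℝ) 1)) := by
    apply Measurable.aestronglyMeasurable
    exact ((mDensity_measurable D₁).comp hγcont.measurable).mul (measurable_deriv γ).norm
  have hmeas2 : AEStronglyMeasurable g2 (volume.restrict (Ioc (0:ℝ) 1)) := by
    apply Measurable.aestronglyMeasurable
    exact ((mDensity_measurable D₂).comp hγ'cont.measurable).mul (measurable_deriv γ').norm
  have hbd1 : ∀ t ∈ Icc (0:ℝ) 1, ‖g1 t‖ ≤ M₁ * K := by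
    intro t ht
    rw [hg1]
    simp only [norm_mul, norm_norm]
    exact mul_le_mul (hM₁ t ht) (norm_deriv_le_lip hK t) (norm_nonneg _) hM₁0
  have hbd2 : ∀ t ∈ Icc (0:ℝ) 1, ‖g2 t‖ ≤ M₂ * (L * K) := by
    intro t ht
    rw [hg2]
    simp only [norm_mul, norm_norm]
    refine mul_le_mul (hM₂ t ht) ?_ (norm_nonneg _) hM₂0
    have := norm_deriv_le_lip hγ'lipW t
    rwa [hK'coe] at this
  have hint1 : IntervalIntegrable g1 volume 0 1 := by
    rw [intervalIntegrable_iff_integrableOn_Ioc_of_le zero_le_one]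
    apply Integrable.mono' (integrable_const (M₁ * K)) hmeas1
    rw [ae_restrict_iff' measurableSet_Ioc]
    exact ae_of_all _ fun t ht => hbd1 t (Ioc_subset_Icc_self ht)
  have hint2 : IntervalIntegrable g2 volume 0 1 := by
    rw [intervalIntegrable_iff_integrableOn_Ioc_of_le zero_le_one]
    apply Integrable.mono' (integrable_const (M₂ * (L * K))) hmeas2
    rw [ae_restrict_iff' measurableSet_Ioc]
    exact ae_of_all _ fun t ht => hbd2 t (Ioc_subset_Icc_self ht)
  have hae : g2 ≤ᵐ[volume.restrict (Icc (0:ℝ) 1)] fun t => 4 * g1 t := by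
    have hrad : ∀ᵐ t ∂(volume : Measure ℝ), DifferentiableAt ℝ γ t := hK.ae_differentiableAt
    have h01 : ∀ᵐ t ∂(volume : Measure ℝ), t ∉ ({0, 1} : Set ℝ) := by
      rw [← measure_eq_zero_iff_ae_notMem]
      exact (Set.toFinite _).measure_zero _
    have hcomb := ((hrad.and h01).filter_mono
        (ae_mono (Measure.restrict_le_self (s := Icc (0:ℝ) 1)))).and
      (ae_restrict_mem (measurableSet_Icc (a := (0:ℝ)) (b := 1)))
    filter_upwards [hcomb] with t ht
    obtain ⟨⟨hdiff, hne⟩, htIcc⟩ := ht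
    have hne' : t ≠ 0 ∧ t ≠ 1 := by
      constructor <;> intro h <;> exact hne (by simp [h])
    have htIoo : t ∈ Ioo (0:ℝ) 1 :=
      ⟨lt_of_le_of_ne htIcc.1 (Ne.symm hne'.1), lt_of_le_of_ne htIcc.2 hne'.2⟩
    have hzt : γ t ∈ D₁ := hγD t htIcc
    have hv : HasDerivAt γ (deriv γ t) t := hdiff.hasDerivAt
    have hfd : HasDerivAt f ((a * d - b * c) / (c * γ t + d) ^ 2) (γ t) :=
      moebius_hasDerivAt hf (hpole _ (subset_closure hzt))
    have hcompd : HasDerivAt (f ∘ γ) (deriv γ t • ((a * d - b * c) / (c * γ t + d) ^ 2)) t :=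
      hfd.scomp t hv
    have heq : γ' =ᶠ[nhds t] (f ∘ γ) := by
      filter_upwards [Ioo_mem_nhds htIoo.1 htIoo.2] with s hs
      show f (γ (qc s)) = f (γ s)
      rw [hqid s (Ioo_subset_Icc_self hs)]
    have hγ'd : HasDerivAt γ' (deriv γ t • ((a * d - b * c) / (c * γ t + d) ^ 2)) t :=
      hcompd.congr_of_eventuallyEq heq
    have hder : deriv γ' t = deriv γ t • ((a * d - b * c) / (c * γ t + d) ^ 2) := hγ'd.deriv
    have hγ't : γ' t = f (γ t) := by
      show f (γ (qc t)) = f (γ t)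
      rw [hqid t htIcc]
    have hkey := density_transfer hD₁open hD₁bdd hD₁proper hD₂open hD₂bdd hD₂proper
      habcd hf hpole hmaps hzt
    have hnorm : ‖deriv γ' t‖ = (‖a * d - b * c‖ / ‖c * γ t + d‖ ^ 2) * ‖deriv γ t‖ := by
      rw [hder, norm_smul, norm_div, norm_pow]
      ring
    show g2 t ≤ 4 * g1 t
    rw [hg2, hg1]
    simp only []
    rw [hγ't, hnorm]
    calc mDensity D₂ (f (γ t)) * ((‖a * d - b * c‖ / ‖c * γ t + d‖ ^ 2) * ‖deriv γ t‖)
        = (mDensity D₂ (f (γ t)) * (‖a * d - b * c‖ / ‖c * γ t + d‖ ^ 2)) * ‖deriv γ t‖ := by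
          ring
      _ ≤ (4 * mDensity D₁ (γ t)) * ‖deriv γ t‖ :=
          mul_le_mul_of_nonneg_right hkey (norm_nonneg _)
      _ = 4 * (mDensity D₁ (γ t) * ‖deriv γ t‖) := by ring
  calc pathIntegral (mDensity D₂) γ' = ∫ t in (0:ℝ)..1, g2 t := rfl
    _ ≤ ∫ t in (0:ℝ)..1, 4 * g1 t :=
        intervalIntegral.integral_mono_ae_restrict zero_le_one hint2 (hint1.const_mul 4) hae
    _ = 4 * ∫ t in (0:ℝ)..1, g1 t := intervalIntegral.integral_const_mul 4 g1
    _ = 4 * pathIntegral (mDensity D₁) γ := rfl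

end Transfer

end MoebiusProof

/-- Proposition: Möbius quasi-invariance of the $m_D$-metric.
If $f(z) = (az+b)/(cz+d)$, $ad − bc ≠ 0$, maps a bounded proper subdomain
$D_1 ⊂ ℂ$ onto $D_2$ (pole outside the closure of $D_1$), then
$(1/4) m_{D_1}(z_1,z_2) ≤ m_{D_2}(f(z_1),f(z_2)) ≤ 4 m_{D_1}(z_1,z_2)$
for all $z_1, z_2 ∈ D_1$. -/
theorem mDist_moebius (D₁ D₂ : Set ℂ)
    (hD₁open : IsOpen D₁) (hD₁conn : IsConnected D₁)
    (hD₁bdd : Bornology.IsBounded D₁) (hD₁proper : D₁ ≠ Set.univ)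
    (hD₂open : IsOpen D₂) (hD₂conn : IsConnected D₂)
    (hD₂bdd : Bornology.IsBounded D₂) (hD₂proper : D₂ ≠ Set.univ)
    (a b c d : ℂ) (habcd : a * d - b * c ≠ 0)
    (f : ℂ → ℂ) (hf : ∀ z : ℂ, f z = (a * z + b) / (c * z + d))
    (hpole : ∀ z ∈ closure D₁, c * z + d ≠ 0)
    (hmaps : f '' D₁ = D₂)
    (z₁ z₂ : ℂ) (hz₁ : z₁ ∈ D₁) (hz₂ : z₂ ∈ D₁) :
    (1 / 4) * mDist D₁ z₁ z₂ ≤ mDist D₂ (f z₁) (f z₂) ∧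
      mDist D₂ (f z₁) (f z₂) ≤ 4 * mDist D₁ z₁ z₂ := by
  -- the inverse Möbius map
  set g : ℂ → ℂ := fun w => (d * w + -b) / (-c * w + a) with hgdef
  have hg : ∀ w : ℂ, g w = (d * w + -b) / (-c * w + a) := fun _ => rfl
  have habcd' : d * a - (-b) * -c ≠ 0 := by
    intro h; apply habcd; linear_combination h
  have hgf : ∀ z ∈ D₁, g (f z) = z := by
    intro z hz
    have hzc : c * z + d ≠ 0 := hpole z (subset_closure hz)
    have h2 : -c * (a * z + b) + a * (c * z + d) ≠ 0 := by
      have he : -c * (a * z + b) + a * (c * z + d) = a * d - b * c := by ring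
      rw [he]; exact habcd
    have h3 : d * a - b * c ≠ 0 := by intro h; apply habcd; linear_combination h
    have h4 : -(c * (a * z + b)) + a * (c * z + d) ≠ 0 := by
      rw [show -(c * (a * z + b)) + a * (c * z + d) = a * d - b * c by ring]
      exact habcd
    rw [hg, hf]
    have hu : (a * z + b) / (c * z + d) * (c * z + d) = a * z + b := div_mul_cancel₀ _ hzc
    have hden : -c * ((a * z + b) / (c * z + d)) + a ≠ 0 := by
      intro h; apply habcd; linear_combination (c * z + d) * h + c * hu
    rw [div_eq_iff hden]
    linear_combination hu
  have hpole₂ : ∀ w ∈ closure D₂, -c * w + a ≠ 0 := by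
    intro w hw
    obtain ⟨ζ, hζ, rfl⟩ := closure_image_subset hD₁bdd hf hpole hmaps hw
    have hζc : c * ζ + d ≠ 0 := hpole ζ hζ
    rw [hf]
    intro h
    apply habcd
    field_simp at h
    linear_combination h
  have hmaps₂ : g '' D₂ = D₁ := by
    rw [← hmaps, ← Set.image_comp]
    have : ∀ z ∈ D₁, (g ∘ f) z = id z := fun z hz => hgf z hz
    rw [Set.image_congr this, Set.image_id]
  have hfz₁ : f z₁ ∈ D₂ := by rw [← hmaps]; exact ⟨z₁, hz₁, rfl⟩
  have hfz₂ : f z₂ ∈ D₂ := by rw [← hmaps]; exact ⟨z₂, hz₂, rfl⟩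
  by_cases hS : ∃ γ : ℝ → ℂ, IsRectPathIn D₁ z₁ z₂ γ
  · obtain ⟨γ₀, hγ₀⟩ := hS
    have hbdd₁ : BddBelow (pathIntegral (mDensity D₁) '' {γ | IsRectPathIn D₁ z₁ z₂ γ}) := by
      refine ⟨0, ?_⟩
      rintro x ⟨γ, hγ, rfl⟩
      exact pathIntegral_nonneg hD₁open hD₁bdd hD₁proper hγ
    have hbdd₂ : BddBelow (pathIntegral (mDensity D₂) ''
        {γ | IsRectPathIn D₂ (f z₁) (f z₂) γ}) := by
      refine ⟨0, ?_⟩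
      rintro x ⟨γ, hγ, rfl⟩
      exact pathIntegral_nonneg hD₂open hD₂bdd hD₂proper hγ
    have hne₁ : (pathIntegral (mDensity D₁) ''
        {γ | IsRectPathIn D₁ z₁ z₂ γ}).Nonempty := ⟨_, ⟨γ₀, hγ₀, rfl⟩⟩
    obtain ⟨γ₀', hγ₀', _⟩ := path_transfer hD₁open hD₁bdd hD₁proper hD₂open hD₂bdd hD₂proper
      habcd hf hpole hmaps hz₁ hγ₀
    have hne₂ : (pathIntegral (mDensity D₂) ''
        {γ | IsRectPathIn D₂ (f z₁) (f z₂) γ}).Nonempty := ⟨_, ⟨γ₀', hγ₀', rfl⟩⟩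
    constructor
    · apply le_csInf hne₂
      rintro y ⟨γ₂, hγ₂, rfl⟩
      obtain ⟨γ₁, hγ₁, hint⟩ := path_transfer hD₂open hD₂bdd hD₂proper hD₁open hD₁bdd
        hD₁proper habcd' hg hpole₂ hmaps₂ hfz₁ hγ₂
      rw [hgf z₁ hz₁, hgf z₂ hz₂] at hγ₁
      have hle : mDist D₁ z₁ z₂ ≤ pathIntegral (mDensity D₁) γ₁ :=
        csInf_le hbdd₁ ⟨γ₁, hγ₁, rfl⟩
      linarith
    · have hstep : ∀ y ∈ pathIntegral (mDensity D₁) '' {γ | IsRectPathIn D₁ z₁ z₂ γ},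
          (1 / 4) * mDist D₂ (f z₁) (f z₂) ≤ y := by
        rintro y ⟨γ, hγ, rfl⟩
        obtain ⟨γ', hγ', hint⟩ := path_transfer hD₁open hD₁bdd hD₁proper hD₂open hD₂bdd
          hD₂proper habcd hf hpole hmaps hz₁ hγ
        have hle : mDist D₂ (f z₁) (f z₂) ≤ pathIntegral (mDensity D₂) γ' :=
          csInf_le hbdd₂ ⟨γ', hγ', rfl⟩
        linarith
      have := le_csInf hne₁ hstep
      have h4 : (1 / 4) * mDist D₂ (f z₁) (f z₂) ≤ mDist D₁ z₁ z₂ := this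
      linarith
  · have hS₂ : ¬ ∃ γ : ℝ → ℂ, IsRectPathIn D₂ (f z₁) (f z₂) γ := by
      rintro ⟨γ₂, hγ₂⟩
      obtain ⟨γ₁, hγ₁, _⟩ := path_transfer hD₂open hD₂bdd hD₂proper hD₁open hD₁bdd hD₁proper
        habcd' hg hpole₂ hmaps₂ hfz₁ hγ₂
      rw [hgf z₁ hz₁, hgf z₂ hz₂] at hγ₁
      exact hS ⟨γ₁, hγ₁⟩
    have h1 : mDist D₁ z₁ z₂ = 0 := by
      show sInf _ = 0
      rw [Set.image_eq_empty.mpr, Real.sInf_empty]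
      exact eq_empty_iff_forall_notMem.mpr fun γ hγ => hS ⟨γ, hγ⟩
    have h2 : mDist D₂ (f z₁) (f z₂) = 0 := by
      show sInf _ = 0
      rw [Set.image_eq_empty.mpr, Real.sInf_empty]
      exact eq_empty_iff_forall_notMem.mpr fun γ hγ => hS₂ ⟨γ, hγ⟩
    rw [h1, h2]
    norm_num
end

section
/- Let D be a bounded proper subdomain of ℝⁿ, n ≥ 2. Then for all x, y ∈ D, m_D(x, y) ≥ log[ (δ_D(y)·(d(D) − δ_D(y))) / (δ_D(x)·(d(D) − δ_D(x))) ]. -/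
open Metric Set

variable {E : Type*} [NormedAddCommGroup E] [NormedSpace ℝ E]

section Aux

open MeasureTheory Filter Topology

/-- FTC-type inequality for monotone continuous functions. -/
lemma aux_monotone_integral_deriv_le {f : ℝ → ℝ} (hf : Monotone f) (hc : Continuous f) :
    ∫ t in (0:ℝ)..1, deriv f t ≤ f 1 - f 0 := by
  set μ := hf.stieltjesFunction.measure with hμ
  haveI : SigmaFinite μ := by infer_instance
  have hF : ∀ x, hf.stieltjesFunction x = f x := fun x =>
    (hf.stieltjesFunction_eq x).trans (rightLim_eq_of_tendsto
      ((hc.tendsto x).mono_left nhdsWithin_le_nhds))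
  have hae : ∀ᵐ t, deriv f t = (μ.rnDeriv volume t).toReal := by
    filter_upwards [hf.ae_hasDerivAt] with t ht using ht.deriv
  rw [intervalIntegral.integral_of_le zero_le_one]
  have hμIoc : μ (Ioc 0 1) = ENNReal.ofReal (f 1 - f 0) := by
    rw [hμ, hf.stieltjesFunction.measure_Ioc, hF, hF]
  calc ∫ t in Ioc (0:ℝ) 1, deriv f t = ∫ t in Ioc (0:ℝ) 1, (μ.rnDeriv volume t).toReal :=
        integral_congr_ae (ae_restrict_of_ae (by filter_upwards [hae] with t ht using ht))
    _ = (∫⁻ t in Ioc (0:ℝ) 1, μ.rnDeriv volume t).toReal :=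
        integral_toReal (μ.measurable_rnDeriv volume).aemeasurable.restrict
          (ae_restrict_of_ae (μ.rnDeriv_lt_top volume))
    _ ≤ (μ (Ioc 0 1)).toReal :=
        ENNReal.toReal_mono (by rw [hμIoc]; exact ENNReal.ofReal_ne_top)
          (Measure.setLIntegral_rnDeriv_le _)
    _ = f 1 - f 0 := by rw [hμIoc, ENNReal.toReal_ofReal (sub_nonneg.2 (hf zero_le_one))]

lemma aux_lipschitzWith_piecewise {F : Type*} [PseudoMetricSpace F] {f g : ℝ → F} {K : NNReal}
    {c : ℝ} (hf : LipschitzWith K f) (hg : LipschitzWith K g) (hfg : f c = g c) :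
    LipschitzWith K (fun t => if t ≤ c then f t else g t) := by
  have key : ∀ s t : ℝ, s ≤ t →
      dist (if s ≤ c then f s else g s) (if t ≤ c then f t else g t) ≤ K * dist s t := by
    intro s t hst
    by_cases hs : s ≤ c <;> by_cases ht : t ≤ c <;> simp only [hs, ht, if_true, if_false]
    · exact hf.dist_le_mul s t
    · push_neg at ht
      calc dist (f s) (g t) ≤ dist (f s) (f c) + dist (f c) (g t) := dist_triangle _ _ _
        _ = dist (f s) (f c) + dist (g c) (g t) := by rw [hfg]
        _ ≤ K * dist s c + K * dist c t := add_le_add (hf.dist_le_mul _ _) (hg.dist_le_mul _ _)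
        _ = K * (dist s c + dist c t) := by ring
        _ = K * dist s t := by
            rw [Real.dist_eq, Real.dist_eq, Real.dist_eq, abs_of_nonpos (by linarith),
              abs_of_nonpos (by linarith), abs_of_nonpos (by linarith)]
            ring
    · exact absurd (hst.trans ht) hs
    · exact hg.dist_le_mul s t
  apply LipschitzWith.of_dist_le_mul
  intro s t
  rcases le_total s t with h | h
  · exact key s t h
  · rw [dist_comm, dist_comm s t]; exact key t s h

lemma aux_ball_bdist_subset {D : Set E} (hDopen : IsOpen D) {z : E} (hz : z ∈ D) :
    Metric.ball z (bdist D z) ⊆ D := by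
  intro w hw
  by_contra hwD
  have hballF : ∀ p ∈ Metric.ball z (bdist D z), p ∉ frontier D := by
    intro p hp hpf
    have h1 : bdist D z ≤ dist z p := Metric.infDist_le_dist_of_mem hpf
    rw [mem_ball, dist_comm] at hp
    linarith
  have hwc : w ∉ closure D := by
    intro hwc
    exact hballF w hw ⟨hwc, by rwa [hDopen.interior_eq]⟩
  have hpos : 0 < bdist D z := lt_of_le_of_lt dist_nonneg (mem_ball.1 hw)
  have hseg : segment ℝ z w ⊆ Metric.ball z (bdist D z) :=
    (convex_ball z (bdist D z)).segment_subset (mem_ball_self hpos) hw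
  obtain ⟨p, hps, hpD, hpc⟩ := (convex_segment z w).isPreconnected D (closure D)ᶜ hDopen
    isClosed_closure.isOpen_compl
    (by
      intro p hp
      by_cases hpD : p ∈ D
      · exact Or.inl hpD
      by_cases hpc : p ∈ closure D
      · exact absurd ⟨hpc, by rwa [hDopen.interior_eq]⟩ (hballF p (hseg hp))
      · exact Or.inr hpc)
    ⟨z, left_mem_segment ℝ z w, hz⟩ ⟨w, right_mem_segment ℝ z w, hwc⟩
  exact hpc (subset_closure hpD)

lemma aux_concat_segment {D : Set E} {x z w : E}
    (hγ : ∃ γ : ℝ → E, IsRectPathIn D x z γ)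
    (hseg : ∀ t : ℝ, t ∈ Icc (0:ℝ) 1 → z + t • (w - z) ∈ D) :
    ∃ γ : ℝ → E, IsRectPathIn D x w γ := by
  obtain ⟨γ, ⟨K, hK⟩, h0, h1, hmem⟩ := hγ
  have h2lip : LipschitzWith 2 (fun t : ℝ => 2 * t) := by
    apply LipschitzWith.of_dist_le_mul
    intro a b
    rw [Real.dist_eq, Real.dist_eq, ← mul_sub, abs_mul]
    norm_num
  have hf : LipschitzWith (K * 2) (fun t : ℝ => γ (2 * t)) := hK.comp h2lip
  have hg : LipschitzWith (2 * ‖w - z‖₊) (fun t : ℝ => z + (2 * t - 1) • (w - z)) := by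
    apply LipschitzWith.of_dist_le_mul
    intro a b
    have h : (z + (2*a - 1) • (w - z)) - (z + (2*b - 1) • (w - z)) = (2*(a-b)) • (w - z) := by
      module
    rw [dist_eq_norm, h, norm_smul, Real.dist_eq]
    push_cast
    rw [Real.norm_eq_abs, abs_mul, abs_two]
    ring_nf
    rw [mul_comm]
  set K' : NNReal := K * 2 ⊔ 2 * ‖w - z‖₊ with hK'
  refine ⟨fun t => if t ≤ 1/2 then γ (2 * t) else z + (2 * t - 1) • (w - z), ⟨K', ?_⟩, ?_, ?_, ?_⟩
  · refine aux_lipschitzWith_piecewise (hf.weaken le_sup_left) (hg.weaken le_sup_right) ?_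
    norm_num [h1]
  · norm_num [h0]
  · norm_num
  · intro t ht
    by_cases h : t ≤ 1/2 <;> simp only [h, if_true, if_false]
    · exact hmem _ ⟨by linarith [ht.1], by linarith⟩
    · push_neg at h
      exact hseg _ ⟨by linarith, by linarith [ht.2]⟩

lemma aux_exists_rect_path {D : Set E} (hDopen : IsOpen D) (hDconn : IsPreconnected D)
    (hpos : ∀ z ∈ D, 0 < bdist D z) {x y : E} (hx : x ∈ D) (hy : y ∈ D) :
    ∃ γ : ℝ → E, IsRectPathIn D x y γ := by
  set A : Set E := {z | z ∈ D ∧ ∃ γ : ℝ → E, IsRectPathIn D x z γ} with hA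
  have hxA : x ∈ A := ⟨hx, fun _ => x, ⟨0, LipschitzWith.const x⟩, rfl, rfl, fun _ _ => hx⟩
  have claim1 : ∀ z ∈ A, Metric.ball z (bdist D z) ⊆ A := by
    rintro z ⟨hzD, hzP⟩ w hw
    refine ⟨aux_ball_bdist_subset hDopen hzD hw, aux_concat_segment hzP ?_⟩
    intro t ht
    apply aux_ball_bdist_subset hDopen hzD
    rw [mem_ball, dist_eq_norm, add_sub_cancel_left, norm_smul,
      Real.norm_eq_abs, abs_of_nonneg ht.1]
    calc t * ‖w - z‖ ≤ 1 * ‖w - z‖ := by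
          apply mul_le_mul_of_nonneg_right ht.2 (norm_nonneg _)
      _ = dist w z := by rw [one_mul, dist_eq_norm]
      _ < bdist D z := mem_ball.1 hw
  have claim2 : ∀ z ∈ D, ∀ a ∈ A, a ∈ Metric.ball z (bdist D z) → z ∈ A := by
    rintro z hzD a ⟨_, haP⟩ hab
    refine ⟨hzD, aux_concat_segment haP ?_⟩
    intro t ht
    apply aux_ball_bdist_subset hDopen hzD
    rw [mem_ball, dist_eq_norm]
    have h : (a + t • (z - a)) - z = (1 - t) • (a - z) := by module
    rw [h, norm_smul, Real.norm_eq_abs, abs_of_nonneg (by linarith [ht.2])]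
    calc (1 - t) * ‖a - z‖ ≤ 1 * ‖a - z‖ :=
          mul_le_mul_of_nonneg_right (by linarith [ht.1]) (norm_nonneg _)
      _ = dist a z := by rw [one_mul, dist_eq_norm]
      _ < bdist D z := mem_ball.1 hab
  by_cases hyA : y ∈ A
  · exact hyA.2
  exfalso
  set u : Set E := ⋃ z ∈ A, Metric.ball z (bdist D z) with hu
  set v : Set E := ⋃ z ∈ D \ A, Metric.ball z (bdist D z) with hv
  obtain ⟨p, hpD, hpu, hpv⟩ := hDconn u v
    (isOpen_biUnion fun _ _ => isOpen_ball) (isOpen_biUnion fun _ _ => isOpen_ball)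
    (by
      intro z hz
      by_cases hzA : z ∈ A
      · exact Or.inl (mem_biUnion hzA (mem_ball_self (hpos z hz)))
      · exact Or.inr (mem_biUnion ⟨hz, hzA⟩ (mem_ball_self (hpos z hz))))
    ⟨x, hx, mem_biUnion hxA (mem_ball_self (hpos x hx))⟩
    ⟨y, hy, mem_biUnion (⟨hy, hyA⟩ : y ∈ D \ A) (mem_ball_self (hpos y hy))⟩
  obtain ⟨z₁, hz₁, hpz₁⟩ := mem_iUnion₂.1 hpu
  obtain ⟨z₂, hz₂, hpz₂⟩ := mem_iUnion₂.1 hpv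
  exact hz₂.2 (claim2 z₂ hz₂.1 p (claim1 z₁ hz₁ hpz₁) hpz₂)

lemma aux_bdist_pos [PreconnectedSpace E] {D : Set E} (hDopen : IsOpen D)
    (hDproper : D ≠ univ) {z : E} (hz : z ∈ D) : 0 < bdist D z := by
  have hne : (frontier D).Nonempty := nonempty_frontier_iff.mpr ⟨⟨z, hz⟩, hDproper⟩
  have hznf : z ∉ frontier D := by
    intro h
    rw [frontier, Set.mem_diff, hDopen.interior_eq] at h
    exact h.2 hz
  exact (isClosed_frontier.notMem_iff_infDist_pos hne).1 hznf

lemma aux_two_bdist_le_diam [Nontrivial E] {D : Set E} (hDopen : IsOpen D)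
    (hDbdd : Bornology.IsBounded D) {z : E} (hz : z ∈ D) :
    2 * bdist D z ≤ Metric.diam D := by
  by_contra hcon
  push_neg at hcon
  obtain ⟨r, hr1, hr2⟩ := exists_between (show Metric.diam D / 2 < bdist D z by linarith)
  have hr0 : 0 ≤ r := le_of_lt (lt_of_le_of_lt (by positivity) hr1)
  obtain ⟨v, hv⟩ := exists_norm_eq E hr0
  have h1 : z + v ∈ D := by
    apply aux_ball_bdist_subset hDopen hz
    rw [mem_ball, dist_eq_norm, add_sub_cancel_left, hv]
    exact hr2
  have h2 : z - v ∈ D := by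
    apply aux_ball_bdist_subset hDopen hz
    rw [mem_ball, dist_eq_norm, sub_sub_cancel_left, norm_neg, hv]
    exact hr2
  have hd := Metric.dist_le_diam_of_mem hDbdd h1 h2
  rw [dist_eq_norm] at hd
  have he : (z + v) - (z - v) = (2:ℝ) • v := by module
  rw [he, norm_smul, Real.norm_two, hv] at hd
  linarith

lemma aux_abs_deriv_le_norm_deriv {u : ℝ → ℝ} {γ : ℝ → E} {t u' : ℝ} {g' : E}
    (hu : HasDerivAt u u' t) (hγ : HasDerivAt γ g' t)
    (hle : ∀ s, |u s - u t| ≤ ‖γ s - γ t‖) : |u'| ≤ ‖g'‖ := by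
  rw [hasDerivAt_iff_tendsto_slope] at hu hγ
  have T1 : Tendsto (fun s => |slope u t s|) (𝓝[≠] t) (𝓝 |u'|) :=
    (continuous_abs.tendsto u').comp hu
  have T2 : Tendsto (fun s => ‖slope γ t s‖) (𝓝[≠] t) (𝓝 ‖g'‖) :=
    (continuous_norm.tendsto g').comp hγ
  refine le_of_tendsto_of_tendsto' T1 T2 ?_
  intro s
  simp only [slope, vsub_eq_sub]
  rw [smul_eq_mul, abs_mul, abs_inv, norm_smul, Real.norm_eq_abs, abs_inv]
  exact mul_le_mul_of_nonneg_left (hle s) (by positivity)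

lemma aux_norm_deriv_le {f : ℝ → E} {K : NNReal} (hf : LipschitzWith K f) (t : ℝ) :
    ‖deriv f t‖ ≤ K := by
  by_cases h : DifferentiableAt ℝ f t
  · have h' := h.hasDerivAt
    rw [hasDerivAt_iff_tendsto_slope] at h'
    have T : Tendsto (fun s => ‖slope f t s‖) (𝓝[≠] t) (𝓝 ‖deriv f t‖) :=
      (continuous_norm.tendsto _).comp h'
    refine le_of_tendsto T ?_
    filter_upwards [self_mem_nhdsWithin] with s hs
    have hs' : s ≠ t := hs
    simp only [slope, vsub_eq_sub]
    rw [norm_smul, Real.norm_eq_abs, abs_inv]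
    rw [inv_mul_le_iff₀ (by simpa [sub_eq_zero] using abs_pos.2 (sub_ne_zero.2 hs'))]
    calc ‖f s - f t‖ = dist (f s) (f t) := (dist_eq_norm _ _).symm
      _ ≤ K * dist s t := hf.dist_le_mul s t
      _ = K * |s - t| := by rw [Real.dist_eq]
      _ = |s - t| * K := mul_comm _ _
  · rw [deriv_zero_of_not_differentiableAt h, norm_zero]
    exact K.coe_nonneg

end Aux

section Key

open MeasureTheory Filter Topology

set_option maxHeartbeats 1000000 in
lemma aux_key {n : ℕ} (hn : 2 ≤ n) {D : Set (EuclideanSpace ℝ (Fin n))}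
    (hDopen : IsOpen D) (hDbdd : Bornology.IsBounded D) (hDproper : D ≠ Set.univ)
    {x y : EuclideanSpace ℝ (Fin n)} (hx : x ∈ D) (hy : y ∈ D)
    (γ : ℝ → EuclideanSpace ℝ (Fin n)) (hγ : IsRectPathIn D x y γ) :
    Real.log ((bdist D y * (Metric.diam D - bdist D y)) /
        (bdist D x * (Metric.diam D - bdist D x)))
      ≤ pathIntegral (mDensity D) γ := by
  haveI : Nonempty (Fin n) := ⟨⟨0, by omega⟩⟩
  obtain ⟨⟨K, hK⟩, h0, h1, hmem⟩ := hγ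
  set d := Metric.diam D with hd_def
  have hxpos : 0 < bdist D x := aux_bdist_pos hDopen hDproper hx
  have hypos : 0 < bdist D y := aux_bdist_pos hDopen hDproper hy
  have hx2 : 2 * bdist D x ≤ d := aux_two_bdist_le_diam hDopen hDbdd hx
  have hd : 0 < d := lt_of_lt_of_le (by linarith) hx2
  -- the projection onto [0,1]
  set π : ℝ → ℝ := fun t => max 0 (min t 1) with hπ_def
  have hπmem : ∀ t, π t ∈ Icc (0:ℝ) 1 := fun t =>
    ⟨le_max_left _ _, max_le zero_le_one (min_le_right _ _)⟩
  have hπid : ∀ t ∈ Icc (0:ℝ) 1, π t = t := fun t ht => by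
    simp only [hπ_def]; rw [min_eq_left ht.2, max_eq_right ht.1]
  have hπlip : LipschitzWith 1 π := by
    apply LipschitzWith.of_dist_le_mul
    intro a b
    rw [Real.dist_eq, Real.dist_eq, NNReal.coe_one, one_mul]
    calc |max 0 (min a 1) - max 0 (min b 1)| ≤ max |0 - 0| |min a 1 - min b 1| :=
          abs_max_sub_max_le_max _ _ _ _
      _ = |min a 1 - min b 1| := by simp
      _ ≤ max |a - b| |1 - 1| := abs_min_sub_min_le_max _ _ _ _
      _ = |a - b| := by simp
  have hγ'lip : LipschitzWith K (fun t => γ (π t)) := by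
    have := hK.comp hπlip; rw [mul_one] at this; exact this
  set u : ℝ → ℝ := fun t => bdist D (γ (π t)) with hu_def
  have hulip : LipschitzWith K u := by
    have := (lipschitz_infDist_pt (frontier D)).comp hγ'lip
    rw [one_mul] at this; exact this
  have hmem' : ∀ t, γ (π t) ∈ D := fun t => hmem _ (hπmem t)
  have hupos : ∀ t, 0 < u t := fun t => aux_bdist_pos hDopen hDproper (hmem' t)
  have hu2 : ∀ t, 2 * u t ≤ d := fun t => aux_two_bdist_le_diam hDopen hDbdd (hmem' t)
  have huIcc : ∀ t ∈ Icc (0:ℝ) 1, u t = bdist D (γ t) := fun t ht => by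
    simp only [hu_def, hπid t ht]
  obtain ⟨t₀, ht₀, hmin⟩ := isCompact_Icc.exists_isMinOn (nonempty_Icc.2 zero_le_one)
    (hulip.continuous.continuousOn (s := Icc (0:ℝ) 1))
  set c := u t₀ with hc_def
  have hc0 : 0 < c := hupos t₀
  have hc : ∀ t, c ≤ u t := fun t => by
    have h1 : u (π t) = u t := by simp only [hu_def]; rw [hπid _ (hπmem t)]
    rw [← h1]
    exact hmin (hπmem t)
  have huin : ∀ t, u t ∈ Icc c (d/2) := fun t => ⟨hc t, by linarith [hu2 t]⟩
  -- the function φ and its derivative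
  set φ : ℝ → ℝ := fun s => Real.log (s * (d - s)) with hφ_def
  set φ' : ℝ → ℝ := fun s => (d - 2*s) / (s * (d - s)) with hφ'_def
  have hden : ∀ s ∈ Icc c (d/2), 0 < s * (d - s) := by
    intro s hs
    have hs0 : 0 < s := lt_of_lt_of_le hc0 hs.1
    have hsd : 0 < d - s := by
      have := hs.2; linarith
    positivity
  have hφd : ∀ s ∈ Icc c (d/2), HasDerivAt φ (φ' s) s := by
    intro s hs
    have hne : s * (d - s) ≠ 0 := ne_of_gt (hden s hs)
    have hinner : HasDerivAt (fun s => s * (d - s)) (d - 2*s) s := by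
      have := (hasDerivAt_id s).mul ((hasDerivAt_const s d).sub (hasDerivAt_id s))
      refine this.congr_deriv ?_
      simp only [Pi.sub_apply, id_eq]; ring
    have := (Real.hasDerivAt_log hne).comp s hinner
    refine this.congr_deriv ?_
    simp only [hφ'_def]
    field_simp
  set M : ℝ := d / (c * (d/2)) with hM_def
  have hM0 : 0 < M := by positivity
  have hφ'le : ∀ s ∈ Icc c (d/2), ‖φ' s‖ ≤ M := by
    intro s hs
    have hs0 : 0 < s := lt_of_lt_of_le hc0 hs.1
    have hd2 : 0 < c * (d/2) := by positivity
    rw [Real.norm_eq_abs, hφ'_def, abs_div, abs_of_nonneg (by linarith [hs.2] : (0:ℝ) ≤ d - 2*s),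
      abs_of_pos (hden s hs), hM_def]
    apply div_le_div₀ hd.le (by linarith) hd2
    apply mul_le_mul hs.1 (by linarith [hs.2]) (by linarith [hd]) (le_of_lt hs0)
  have hφlb : ∀ a ∈ Icc c (d/2), ∀ b ∈ Icc c (d/2), ‖φ b - φ a‖ ≤ M * ‖b - a‖ :=
    fun a ha b hb => (convex_Icc c (d/2)).norm_image_sub_le_of_norm_hasDerivWithin_le
      (fun s hs => (hφd s hs).hasDerivWithinAt) (fun s hs => hφ'le s hs) ha hb
  -- g and its Lipschitz property
  set g : ℝ → ℝ := fun t => φ (u t) with hg_def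
  set Mn : NNReal := Real.toNNReal M with hMn_def
  have hMn : (Mn : ℝ) = M := Real.coe_toNNReal M hM0.le
  have hg_lip : LipschitzWith (Mn * K) g := by
    apply LipschitzWith.of_dist_le_mul
    intro a b
    rw [Real.dist_eq]
    calc |g a - g b| = ‖φ (u a) - φ (u b)‖ := by rw [Real.norm_eq_abs]
      _ ≤ M * ‖u a - u b‖ := hφlb (u b) (huin b) (u a) (huin a)
      _ = M * dist (u a) (u b) := by rw [dist_eq_norm]
      _ ≤ M * (K * dist a b) := mul_le_mul_of_nonneg_left (hulip.dist_le_mul a b) hM0.le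
      _ = (Mn * K : NNReal) * dist a b := by push_cast; rw [hMn]; ring
  set L : ℝ := ((Mn * K : NNReal) : ℝ) with hL_def
  have hL0 : 0 ≤ L := (Mn * K).coe_nonneg
  set f₀ : ℝ → ℝ := fun t => L * t - g t with hf₀_def
  have hf₀mono : Monotone f₀ := by
    intro s t hst
    simp only [hf₀_def]
    have h2 := (hg_lip.dist_le_mul t s)
    rw [Real.dist_eq, Real.dist_eq, abs_of_nonneg (by linarith : (0:ℝ) ≤ t - s)] at h2
    have h3 := le_abs_self (g t - g s)
    rw [← hL_def] at h2
    nlinarith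
  have hf₀cont : Continuous f₀ := (continuous_const.mul continuous_id).sub hg_lip.continuous
  have hFTC := aux_monotone_integral_deriv_le hf₀mono hf₀cont
  -- a.e. differentiability and pointwise bound
  have hγae : ∀ᵐ t : ℝ, DifferentiableAt ℝ γ t := hK.ae_differentiableAt
  have huae : ∀ᵐ t : ℝ, DifferentiableAt ℝ u t := hulip.ae_differentiableAt_of_real
  have Hae : ∀ᵐ t : ℝ, t ∈ Ioo (0:ℝ) 1 →
      HasDerivAt g (deriv g t) t ∧ deriv g t ≤ mDensity D (γ t) * ‖deriv γ t‖ := by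
    filter_upwards [hγae, huae] with t h1 h2 ht
    have hγ' : HasDerivAt γ (deriv γ t) t := h1.hasDerivAt
    have hu' : HasDerivAt u (deriv u t) t := h2.hasDerivAt
    have hφ' := hφd (u t) (huin t)
    have hg' : HasDerivAt g (φ' (u t) * deriv u t) t := hφ'.comp t hu'
    have hγeq : (fun s => γ (π s)) =ᶠ[𝓝 t] γ := by
      filter_upwards [isOpen_Ioo.mem_nhds ht] with s hs
      rw [hπid s (Ioo_subset_Icc_self hs)]
    have hγ2 : HasDerivAt (fun s => γ (π s)) (deriv γ t) t := by
      exact hγ'.congr_of_eventuallyEq hγeq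
    have habs : |deriv u t| ≤ ‖deriv γ t‖ := by
      apply aux_abs_deriv_le_norm_deriv hu' hγ2
      intro s
      have h3 := (lipschitz_infDist_pt (frontier D)).dist_le_mul (γ (π s)) (γ (π t))
      rw [NNReal.coe_one, one_mul, dist_eq_norm] at h3
      calc |u s - u t| = dist (u s) (u t) := (Real.dist_eq _ _).symm
        _ ≤ ‖γ (π s) - γ (π t)‖ := h3
    have hdgt : deriv g t = φ' (u t) * deriv u t := hg'.deriv
    constructor
    · rw [hdgt]; exact hg'
    · rw [hdgt]
      have htIcc : t ∈ Icc (0:ℝ) 1 := Ioo_subset_Icc_self ht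
      have hmD : mDensity D (γ t) = d / (u t * (d - u t)) := by
        rw [mDensity, ← huIcc t htIcc, ← hd_def]
      have hdenpos : 0 < u t * (d - u t) := hden (u t) (huin t)
      have h1' : φ' (u t) ≤ d / (u t * (d - u t)) := by
        rw [hφ'_def]
        exact (div_le_div_iff_of_pos_right hdenpos).2 (by linarith [hupos t])
      have h2' : 0 ≤ φ' (u t) := by
        rw [hφ'_def]
        exact div_nonneg (by linarith [hu2 t]) hdenpos.le
      calc φ' (u t) * deriv u t ≤ φ' (u t) * |deriv u t| :=
            mul_le_mul_of_nonneg_left (le_abs_self _) h2'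
        _ ≤ (d / (u t * (d - u t))) * ‖deriv γ t‖ :=
            mul_le_mul h1' habs (abs_nonneg _) (by positivity)
        _ = mDensity D (γ t) * ‖deriv γ t‖ := by rw [hmD]
  -- integrability
  have hdne : ∀ t : ℝ, u t * (d - u t) ≠ 0 := fun t => ne_of_gt (hden (u t) (huin t))
  have hψcont : Continuous (fun t => d / (u t * (d - u t))) :=
    continuous_const.div ((hulip.continuous).mul (continuous_const.sub hulip.continuous)) hdne
  have hmDeq : ∀ t ∈ Ioc (0:ℝ) 1, mDensity D (γ t) = d / (u t * (d - u t)) := fun t ht => by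
    rw [mDensity, ← huIcc t ⟨ht.1.le, ht.2⟩, ← hd_def]
  have hK' : ∀ t, ‖deriv γ t‖ ≤ K := aux_norm_deriv_le hK
  have hmD_le : ∀ t : ℝ, d / (u t * (d - u t)) ≤ M := by
    intro t
    rw [hM_def]
    apply div_le_div₀ hd.le le_rfl (mul_pos hc0 (by linarith))
    exact mul_le_mul (hc t) (by linarith [hu2 t]) (by linarith [hd]) (hupos t).le
  have hint_h : IntervalIntegrable (fun t => mDensity D (γ t) * ‖deriv γ t‖) volume 0 1 := by
    rw [intervalIntegrable_iff, uIoc_of_le zero_le_one]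
    apply Integrable.mono' (g := fun _ => M * K)
      (integrableOn_const measure_Ioc_lt_top.ne)
    · apply AEStronglyMeasurable.mul
      · apply ((hψcont.aestronglyMeasurable).restrict).congr
        exact (ae_restrict_iff' measurableSet_Ioc).2
          (ae_of_all _ fun t ht => (hmDeq t ht).symm)
      · exact (measurable_deriv γ).norm.aestronglyMeasurable.restrict
    · refine (ae_restrict_iff' measurableSet_Ioc).2 (ae_of_all _ fun t ht => ?_)
      rw [hmDeq t ht, Real.norm_eq_abs,
        abs_of_nonneg (mul_nonneg (div_nonneg hd.le (hden (u t) (huin t)).le) (norm_nonneg _))]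
      exact mul_le_mul (hmD_le t) (hK' t) (norm_nonneg _) hM0.le
  have hgd_le : ∀ t, |deriv g t| ≤ L := fun t => by
    have := aux_norm_deriv_le hg_lip t
    rwa [Real.norm_eq_abs] at this
  have hint_g : IntervalIntegrable (deriv g) volume 0 1 := by
    rw [intervalIntegrable_iff, uIoc_of_le zero_le_one]
    apply Integrable.mono' (g := fun _ => L) (integrableOn_const measure_Ioc_lt_top.ne)
    · exact (measurable_deriv g).aestronglyMeasurable.restrict
    · exact ae_of_all _ fun t => by rw [Real.norm_eq_abs]; exact hgd_le t
  -- null endpoints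
  have h01 : ∀ᵐ t : ℝ, ¬(t = 0 ∨ t = 1) := by
    have hm : volume ({0, 1} : Set ℝ) = 0 :=
      Set.Countable.measure_zero ((Set.countable_singleton (1:ℝ)).insert 0) _
    have := measure_eq_zero_iff_ae_notMem.1 hm
    filter_upwards [this] with t ht
    simpa using ht
  -- FTC chain
  have I2 : ∫ t in (0:ℝ)..1, deriv f₀ t = ∫ t in (0:ℝ)..1, (L - deriv g t) := by
    apply intervalIntegral.integral_congr_ae
    filter_upwards [Hae, h01] with t hHae h01t ht'
    rw [uIoc_of_le zero_le_one] at ht'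
    have htoo : t ∈ Ioo (0:ℝ) 1 := ⟨ht'.1, lt_of_le_of_ne ht'.2 (by tauto)⟩
    obtain ⟨hg', _⟩ := hHae htoo
    have hL' : HasDerivAt (fun s : ℝ => L * s) L t := by
      simpa using (hasDerivAt_id t).const_mul L
    exact (hL'.sub hg').deriv
  have I3 : ∫ t in (0:ℝ)..1, (L - deriv g t) = L - ∫ t in (0:ℝ)..1, deriv g t := by
    rw [intervalIntegral.integral_sub intervalIntegrable_const hint_g,
      intervalIntegral.integral_const]
    simp
  have hfin : g 1 - g 0 ≤ ∫ t in (0:ℝ)..1, deriv g t := by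
    rw [I2, I3] at hFTC
    simp only [hf₀_def] at hFTC
    linarith
  have I4 : ∫ t in (0:ℝ)..1, deriv g t ≤ ∫ t in (0:ℝ)..1, mDensity D (γ t) * ‖deriv γ t‖ := by
    apply intervalIntegral.integral_mono_ae_restrict zero_le_one hint_g hint_h
    have hmem01 := ae_restrict_mem (μ := volume) (measurableSet_Icc : MeasurableSet (Icc (0:ℝ) 1))
    filter_upwards [ae_restrict_of_ae Hae, ae_restrict_of_ae h01, hmem01] with t hHae h01t ht'
    have htoo : t ∈ Ioo (0:ℝ) 1 :=
      ⟨lt_of_le_of_ne ht'.1 (by tauto), lt_of_le_of_ne ht'.2 (by tauto)⟩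
    exact (hHae htoo).2
  -- endpoint values
  have hu1 : u 1 = bdist D y := by rw [huIcc 1 ⟨zero_le_one, le_rfl⟩, h1]
  have hu0 : u 0 = bdist D x := by rw [huIcc 0 ⟨le_rfl, zero_le_one⟩, h0]
  have hy2 : 2 * bdist D y ≤ d := aux_two_bdist_le_diam hDopen hDbdd hy
  have hAx : 0 < bdist D x * (d - bdist D x) := mul_pos hxpos (by linarith)
  have hAy : 0 < bdist D y * (d - bdist D y) := mul_pos hypos (by linarith)
  have hlog : Real.log ((bdist D y * (d - bdist D y)) / (bdist D x * (d - bdist D x)))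
      = g 1 - g 0 := by
    rw [Real.log_div hAy.ne' hAx.ne']
    simp only [hg_def, hφ_def, hu1, hu0]
  rw [hlog]
  calc g 1 - g 0 ≤ ∫ t in (0:ℝ)..1, deriv g t := hfin
    _ ≤ ∫ t in (0:ℝ)..1, mDensity D (γ t) * ‖deriv γ t‖ := I4
    _ = pathIntegral (mDensity D) γ := rfl

end Key

/-- Corollary: logarithmic lower bound for the $m_D$-metric.
For a bounded proper subdomain $D ⊂ ℝ^n$, $n ≥ 2$, and all $x, y ∈ D$:
$m_D(x,y) ≥ \log[(δ_D(y)(d(D) − δ_D(y)))/(δ_D(x)(d(D) − δ_D(x)))]$. -/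
theorem mDist_log_lower_bound {n : ℕ} (hn : 2 ≤ n)
    (D : Set (EuclideanSpace ℝ (Fin n)))
    (hDopen : IsOpen D) (hDconn : IsConnected D)
    (hDbdd : Bornology.IsBounded D) (hDproper : D ≠ Set.univ)
    (x y : EuclideanSpace ℝ (Fin n)) (hx : x ∈ D) (hy : y ∈ D) :
    Real.log ((bdist D y * (Metric.diam D - bdist D y)) /
        (bdist D x * (Metric.diam D - bdist D x)))
      ≤ mDist D x y := by
  have hpos : ∀ z ∈ D, 0 < bdist D z := fun z hz => aux_bdist_pos hDopen hDproper hz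
  obtain ⟨γ0, hγ0⟩ := aux_exists_rect_path hDopen hDconn.isPreconnected hpos hx hy
  rw [mDist, pathDist]
  refine le_csInf ⟨_, ⟨γ0, hγ0, rfl⟩⟩ ?_
  rintro b ⟨γ, hγ, rfl⟩
  exact aux_key hn hDopen hDbdd hDproper hx hy γ hγ
end

section
/- Let D be a bounded proper subdomain of ℂ, let a ∈ ℂ \ D, and let γ be a closed rectifiable curve in D whose winding number around a is nonzero (so that γ is a non-trivial closed curve surrounding a hole of D containing a). Then ∫_γ m_D(z)|dz| ≥ 2π. -/
open Metric Set

variable {E : Type*} [NormedAddCommGroup E] [NormedSpace ℝ E]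

/-- The winding number (index) of a closed rectifiable curve `γ` (parametrized on
`[0,1]`) around a point `a`, given by `(1/(2πi)) ∫_γ dz/(z − a)`. -/
noncomputable def windingNumber (γ : ℝ → ℂ) (a : ℂ) : ℂ :=
  (2 * Real.pi * Complex.I)⁻¹ * ∫ t in (0:ℝ)..1, deriv γ t / (γ t - a)

section Aux

open MeasureTheory Filter intervalIntegral

/-- Fundamental theorem of calculus for Lipschitz functions. -/
theorem lipFTC {f : ℝ → ℂ} {K : NNReal} (hf : LipschitzWith K f)
    {a b : ℝ} (hab : a ≤ b) : ∫ t in a..b, deriv f t = f b - f a := by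
  have hcont : Continuous f := hf.continuous
  set h : ℕ → ℝ := fun n => 1 / ((n : ℝ) + 1) with hh
  have hhpos : ∀ n, 0 < h n := fun n => by positivity
  have hh0 : Tendsto h atTop (nhds 0) := tendsto_one_div_add_atTop_nhds_zero_nat
  set F : ℕ → ℝ → ℂ := fun n t => ((n : ℝ) + 1) • (f (t + h n) - f t) with hF
  have hlip : ∀ (n : ℕ) (t : ℝ), ‖f (t + h n) - f t‖ ≤ (K : ℝ) * h n := by
    intro n t
    have := hf.dist_le_mul (t + h n) t
    rw [dist_eq_norm, dist_eq_norm] at this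
    simpa [abs_of_pos (hhpos n)] using this
  have hFbdd : ∀ n t, ‖F n t‖ ≤ (K : ℝ) := by
    intro n t
    calc ‖F n t‖ = ((n : ℝ) + 1) * ‖f (t + h n) - f t‖ := by
          rw [norm_smul, Real.norm_eq_abs, abs_of_pos (by positivity)]
      _ ≤ ((n : ℝ) + 1) * ((K : ℝ) * h n) :=
          mul_le_mul_of_nonneg_left (hlip n t) (by positivity)
      _ = (K : ℝ) := by simp only [hh]; field_simp
  have hae : ∀ᵐ t, Tendsto (fun n => F n t) atTop (nhds (deriv f t)) := by
    filter_upwards [hf.ae_differentiableAt] with t ht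
    have hd := ht.hasDerivAt
    have hslope := hasDerivAt_iff_tendsto_slope.1 hd
    have hseq : Tendsto (fun n => t + h n) atTop (nhdsWithin t {t}ᶜ) := by
      rw [tendsto_nhdsWithin_iff]
      constructor
      · have : Tendsto (fun n => t + h n) atTop (nhds (t + 0)) :=
          tendsto_const_nhds.add hh0
        simpa using this
      · filter_upwards with n
        simp only [Set.mem_compl_iff, Set.mem_singleton_iff]
        exact fun hc => (hhpos n).ne' (by linarith)
    have hcmp := hslope.comp hseq
    have heq : (fun n => slope f t (t + h n)) = fun n => F n t := by
      funext n
      rw [slope, vsub_eq_sub, add_sub_cancel_left, hF]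
      simp only
      congr 1
      simp only [hh]; field_simp
    rw [hd.deriv]
    rwa [Function.comp_def, heq] at hcmp
  have hmeasF : ∀ n, AEStronglyMeasurable (F n) (volume.restrict (Set.uIoc a b)) :=
    fun n => (show Continuous (F n) by simp only [hF]; fun_prop).aestronglyMeasurable
  have hDCT : Tendsto (fun n => ∫ t in a..b, F n t) atTop (nhds (∫ t in a..b, deriv f t)) := by
    apply intervalIntegral.tendsto_integral_filter_of_dominated_convergence
      (fun _ => (K : ℝ))
      (Eventually.of_forall hmeasF)
      (Eventually.of_forall fun n => Eventually.of_forall fun t _ => hFbdd n t)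
      intervalIntegrable_const
    exact hae.mono fun t ht _ => ht
  have hInt : ∀ c d : ℝ, IntervalIntegrable f volume c d := fun c d =>
    hcont.intervalIntegrable c d
  have hend : ∀ c : ℝ, Tendsto (fun n : ℕ => ((n : ℝ) + 1) • ∫ t in c..(c + h n), f t)
      atTop (nhds (f c)) := by
    intro c
    have key : ∀ n : ℕ, ‖((n : ℝ) + 1) • (∫ t in c..(c + h n), f t) - f c‖ ≤ (K : ℝ) * h n := by
      intro n
      have h1 : (∫ t in c..(c + h n), f t) - (h n) • f c = ∫ t in c..(c + h n), (f t - f c) := by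
        rw [intervalIntegral.integral_sub (hInt _ _) intervalIntegrable_const]
        congr 1
        rw [intervalIntegral.integral_const]
        simp
      have h2 : ‖∫ t in c..(c + h n), (f t - f c)‖ ≤ ((K : ℝ) * h n) * |c + h n - c| := by
        apply intervalIntegral.norm_integral_le_of_norm_le_const
        intro x hx
        rw [Set.uIoc_of_le (by linarith [hhpos n])] at hx
        have hd := hf.dist_le_mul x c
        rw [dist_eq_norm, dist_eq_norm] at hd
        refine hd.trans ?_
        have hxc : |x - c| ≤ h n := by
          rw [abs_of_pos (by linarith [hx.1])]
          linarith [hx.2]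
        exact mul_le_mul_of_nonneg_left hxc K.2
      have h3 : ((n : ℝ) + 1) • ((∫ t in c..(c + h n), f t) - (h n) • f c)
          = ((n : ℝ) + 1) • (∫ t in c..(c + h n), f t) - f c := by
        rw [smul_sub, smul_smul]
        congr 2
        have h4 : ((n : ℝ) + 1) * h n = 1 := by simp only [hh]; field_simp
        rw [h4, one_smul]
      calc ‖((n : ℝ) + 1) • (∫ t in c..(c + h n), f t) - f c‖
          = ((n : ℝ) + 1) * ‖(∫ t in c..(c + h n), f t) - (h n) • f c‖ := by
            rw [← h3, norm_smul, Real.norm_eq_abs, abs_of_pos (by positivity)]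
        _ ≤ ((n : ℝ) + 1) * (((K : ℝ) * h n) * |c + h n - c|) := by
            rw [h1]; exact mul_le_mul_of_nonneg_left h2 (by positivity)
        _ = (K : ℝ) * h n := by
            rw [add_sub_cancel_left, abs_of_pos (hhpos n)]
            simp only [hh]; field_simp
    have hz : Tendsto (fun n : ℕ => ((n : ℝ) + 1) • (∫ t in c..(c + h n), f t) - f c)
        atTop (nhds 0) := by
      apply squeeze_zero_norm key
      simpa using (tendsto_const_nhds (x := (K:ℝ))).mul hh0
    have := hz.add (tendsto_const_nhds (x := f c))
    simpa using this
  have hFval : ∀ n : ℕ, (∫ t in a..b, F n t) =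
      ((n : ℝ) + 1) • (∫ t in b..(b + h n), f t) - ((n : ℝ) + 1) • (∫ t in a..(a + h n), f t) := by
    intro n
    have h1 : (∫ t in a..b, f (t + h n)) = ∫ t in (a + h n)..(b + h n), f t :=
      intervalIntegral.integral_comp_add_right f (h n)
    have h2 : (∫ t in a..(a + h n), f t) + (∫ t in (a + h n)..(b + h n), f t)
        = (∫ t in a..b, f t) + (∫ t in b..(b + h n), f t) := by
      rw [intervalIntegral.integral_add_adjacent_intervals (hInt _ _) (hInt _ _),
        intervalIntegral.integral_add_adjacent_intervals (hInt _ _) (hInt _ _)]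
    have h5 : (∫ t in a..b, F n t)
        = ((n : ℝ) + 1) • ((∫ t in a..b, f (t + h n)) - ∫ t in a..b, f t) := by
      rw [smul_sub, ← intervalIntegral.integral_smul, ← intervalIntegral.integral_smul,
        ← intervalIntegral.integral_sub]
      · simp only [hF, smul_sub]
      · exact ((hcont.comp (continuous_id.add continuous_const)).intervalIntegrable a b).smul _
      · exact (hInt a b).smul _
    rw [h5, h1, ← smul_sub]
    congr 1
    linear_combination h2
  have hlim2 : Tendsto (fun n : ℕ => ∫ t in a..b, F n t) atTop (nhds (f b - f a)) := by
    simp only [hFval]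
    exact (hend b).sub (hend a)
  exact tendsto_nhds_unique hDCT hlim2

theorem crossing {D : Set ℂ} (hDopen : IsOpen D) {z w : ℂ} (hz : z ∈ D) (hw : w ∉ D) :
    Metric.infDist z (frontier D) ≤ dist z w := by
  have hseg : segment ℝ z w ⊆ closedBall z (dist z w) := by
    apply (convex_closedBall z (dist z w)).segment_subset
    · exact Metric.mem_closedBall_self dist_nonneg
    · simp [mem_closedBall, dist_comm]
  have hy : ∃ y ∈ frontier D, y ∈ segment ℝ z w := by
    by_cases hwc : w ∈ closure D
    · exact ⟨w, ⟨hwc, by simpa using fun h => hw (interior_subset h)⟩, right_mem_segment ℝ z w⟩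
    · by_contra hcon
      push_neg at hcon
      have hsub : segment ℝ z w ⊆ interior D ∪ (closure D)ᶜ := by
        intro y hy
        by_cases h1 : y ∈ closure D
        · left
          rcases (em (y ∈ interior D)) with h2 | h2
          · exact h2
          · exact absurd ⟨h1, h2⟩ (fun h => hcon y h hy)
        · right; exact h1
      have := (convex_segment z w).isPreconnected _ _ isOpen_interior
        (isClosed_closure.isOpen_compl) hsub
        ⟨z, left_mem_segment ℝ z w, by rw [hDopen.interior_eq]; exact hz⟩
        ⟨w, right_mem_segment ℝ z w, hwc⟩
      rcases this with ⟨y, _, hy1, hy2⟩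
      exact hy2 (subset_closure (interior_subset hy1))
  rcases hy with ⟨y, hyf, hyseg⟩
  exact (Metric.infDist_le_dist_of_mem hyf).trans (by simpa [dist_comm] using hseg hyseg)

theorem bdist_facts {D : Set ℂ} (hDopen : IsOpen D) (hDne : D.Nonempty)
    (hDproper : D ≠ Set.univ) (hDbdd : Bornology.IsBounded D) {z : ℂ} (hz : z ∈ D) :
    0 < bdist D z ∧ 2 * bdist D z ≤ Metric.diam D := by
  have hfne : (frontier D).Nonempty := nonempty_frontier_iff.2 ⟨hDne, hDproper⟩
  have hzf : z ∉ frontier D := fun h =>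
    Set.disjoint_left.1 (disjoint_frontier_iff_isOpen.2 hDopen) h hz
  have hpos : 0 < bdist D z := (isClosed_frontier.notMem_iff_infDist_pos hfne).1 hzf
  refine ⟨hpos, ?_⟩
  have hball : Metric.ball z (bdist D z) ⊆ D := by
    intro w hwb
    by_contra hw
    exact absurd (crossing hDopen hz hw) (by simpa [bdist] using (mem_ball'.1 hwb))
  apply le_of_forall_sub_le
  intro ε hε
  rcases le_or_gt (2 * bdist D z - ε) 0 with h | h
  · exact h.trans Metric.diam_nonneg
  · obtain ⟨r, hr0, hrlt, hre⟩ : ∃ r : ℝ, 0 < r ∧ r < bdist D z ∧ 2 * r = 2 * bdist D z - ε :=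
      ⟨bdist D z - ε / 2, by linarith, by linarith, by ring⟩
    have h1 : z + (r:ℂ) ∈ D := by
      apply hball
      rw [mem_ball, Complex.dist_eq, add_sub_cancel_left, Complex.norm_real, Real.norm_eq_abs, abs_of_pos hr0]
      exact hrlt
    have h2 : z - (r:ℂ) ∈ D := by
      apply hball
      rw [mem_ball, Complex.dist_eq, sub_sub_cancel_left, norm_neg, Complex.norm_real, Real.norm_eq_abs,
        abs_of_pos hr0]
      exact hrlt
    have hd := Metric.dist_le_diam_of_mem hDbdd h1 h2
    rw [Complex.dist_eq, show (z + (r:ℂ)) - (z - (r:ℂ)) = ((2*r : ℝ) : ℂ) by push_cast; ring,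
      Complex.norm_real, Real.norm_eq_abs, abs_of_pos (by linarith)] at hd
    linarith

theorem mDensity_ge {D : Set ℂ} (hDopen : IsOpen D) (hDne : D.Nonempty)
    (hDproper : D ≠ Set.univ) (hDbdd : Bornology.IsBounded D) {z : ℂ} (hz : z ∈ D)
    {w : ℂ} (hw : w ∉ D) : 1 / dist z w ≤ mDensity D z := by
  obtain ⟨hpos, hdiam⟩ := bdist_facts hDopen hDne hDproper hDbdd hz
  have hle : bdist D z ≤ dist z w := crossing hDopen hz hw
  set δ := bdist D z
  set d := Metric.diam D
  have hd : 0 < d := lt_of_lt_of_le (by linarith) hdiam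
  have h1 : (1:ℝ) / dist z w ≤ 1 / δ := by
    apply one_div_le_one_div_of_le hpos hle
  refine h1.trans ?_
  rw [mDensity]
  rw [div_le_div_iff₀ hpos (mul_pos hpos (by linarith))]
  have hδd : δ < d := by linarith
  calc 1 * (δ * (d - δ)) = δ * (d - δ) := by ring
    _ ≤ δ * d := by nlinarith
    _ = d * δ := by ring

theorem seg_log {γ : ℝ → ℂ} {K : NNReal} (hK : LipschitzWith K γ) {a : ℂ} {ε : ℝ}
    (hε : 0 < ε) {c d : ℝ} (hcd : c ≤ d)
    (hbound : ∀ t ∈ Set.Icc c d, ε ≤ ‖γ t - a‖)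
    (hsmall : (K : ℝ) * (d - c) ≤ ε / 2) :
    (∫ t in c..d, deriv γ t / (γ t - a)) = Complex.log ((γ d - a) / (γ c - a)) := by
  set wc : ℂ := γ c - a with hwc
  have hwcnorm : ε ≤ ‖wc‖ := hbound c ⟨le_refl c, hcd⟩
  have hwc0 : wc ≠ 0 := fun h => by rw [h] at hwcnorm; simp at hwcnorm; linarith
  set q : ℝ → ℝ := fun t => max (min t d) c with hqdef
  have hq : LipschitzWith 1 q := (LipschitzWith.id.min_const d).max_const c
  have hqmem : ∀ t, q t ∈ Set.Icc c d := fun t =>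
    ⟨le_max_right _ _, max_le (min_le_right t d) hcd⟩
  have hqeq : ∀ t ∈ Set.Icc c d, q t = t := fun t ht => by
    rw [hqdef]; simp only; rw [min_eq_left ht.2, max_eq_left ht.1]
  set r : ℝ → ℂ := fun t => (γ (q t) - a) / wc with hrdef
  have hmulc : LipschitzWith ‖wc⁻¹‖₊ (fun z : ℂ => z * wc⁻¹) := by
    apply LipschitzWith.of_dist_le_mul
    intro x y
    rw [dist_eq_norm, dist_eq_norm, ← sub_mul, norm_mul]
    rw [mul_comm]
    gcongr
    exact le_refl _
  have hsubc : LipschitzWith 1 (fun z : ℂ => z - a) := by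
    apply LipschitzWith.of_dist_le_mul
    intro x y
    rw [dist_sub_right]; simp
  obtain ⟨Kr, hrlip⟩ : ∃ Kr : NNReal, LipschitzWith Kr r := by
    refine ⟨‖wc⁻¹‖₊ * (1 * (K * 1)), ?_⟩
    have hcomp := hmulc.comp (hsubc.comp (hK.comp hq))
    have heq : ((fun z : ℂ => z * wc⁻¹) ∘ ((fun z : ℂ => z - a) ∘ (γ ∘ q))) = r := by
      funext t
      simp [hrdef, div_eq_mul_inv]
    rwa [heq] at hcomp
  have himg : ∀ t, r t ∈ Metric.closedBall (1:ℂ) (1/2) := by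
    intro t
    rw [Metric.mem_closedBall, dist_eq_norm, hrdef]
    have h1 : (γ (q t) - a) / wc - 1 = (γ (q t) - γ c) / wc := by
      field_simp [hwc]
      rw [hwc]; ring
    simp only
    rw [h1, norm_div]
    have h2 : ‖γ (q t) - γ c‖ ≤ (K : ℝ) * (d - c) := by
      have := hK.dist_le_mul (q t) c
      rw [dist_eq_norm] at this
      refine this.trans ?_
      gcongr
      rw [Real.dist_eq, abs_of_nonneg (by linarith [(hqmem t).1])]
      linarith [(hqmem t).2]
    calc ‖γ (q t) - γ c‖ / ‖wc‖ ≤ (ε / 2) / ε := by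
          apply div_le_div₀ (by linarith) (h2.trans hsmall) hε hwcnorm
      _ = 1/2 := by field_simp
  have hre : ∀ z : ℂ, z ∈ Metric.closedBall (1:ℂ) (1/2) → (1:ℝ)/2 ≤ z.re := by
    intro z hz
    rw [Metric.mem_closedBall, dist_eq_norm] at hz
    have := Complex.abs_re_le_norm (z - 1)
    rw [Complex.sub_re, Complex.one_re] at this
    have h2 := abs_le.1 (this.trans hz)
    linarith [h2.1]
  have hlogLip : LipschitzOnWith 2 Complex.log (Metric.closedBall (1:ℂ) (1/2)) := by
    apply (convex_closedBall (1:ℂ) (1/2)).lipschitzOnWith_of_nnnorm_hasDerivWithin_le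
      (f' := fun z => z⁻¹)
    · intro z hz
      exact (Complex.hasDerivAt_log (Or.inl (by linarith [hre z hz]))).hasDerivWithinAt
    · intro z hz
      have hz2 : (1:ℝ)/2 ≤ ‖z‖ :=
        (hre z hz).trans ((le_abs_self _).trans (Complex.abs_re_le_norm z))
      have hznorm : ‖z⁻¹‖ ≤ 2 := by
        rw [norm_inv]
        rw [inv_le_comm₀ (by linarith) (by norm_num)]
        linarith
      exact_mod_cast hznorm
  set g : ℝ → ℂ := fun t => Complex.log (r t) with hgdef
  obtain ⟨Kg, hglip⟩ : ∃ Kg : NNReal, LipschitzWith Kg g := by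
    refine ⟨2 * Kr, ?_⟩
    rw [← lipschitzOnWith_univ]
    exact hlogLip.comp (hrlip.lipschitzOnWith) (fun t _ => himg t)
  have haed : ∀ᵐ t : ℝ, t ≠ d := by
    rw [MeasureTheory.ae_iff]
    simp only [not_not, Set.setOf_eq_eq_singleton]
    exact MeasureTheory.measure_singleton d
  have hgderiv : ∀ᵐ t : ℝ, t ∈ Set.uIoc c d → deriv g t = deriv γ t / (γ t - a) := by
    filter_upwards [hK.ae_differentiableAt, haed] with t ht htd hmem
    rw [Set.uIoc_of_le hcd] at hmem
    have htIoo : t ∈ Set.Ioo c d := ⟨hmem.1, lt_of_le_of_ne hmem.2 htd⟩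
    have hta : γ t - a ≠ 0 := by
      intro h
      have := hbound t ⟨htIoo.1.le, htIoo.2.le⟩
      rw [h] at this; simp at this; linarith
    have hloc : ∀ᶠ s in nhds t, g s = Complex.log ((γ s - a) / wc) := by
      filter_upwards [Ioo_mem_nhds htIoo.1 htIoo.2] with s hs
      rw [hgdef]
      simp only
      rw [hrdef]
      simp only
      rw [hqeq s ⟨hs.1.le, hs.2.le⟩]
    have hinner : HasDerivAt (fun s => (γ s - a) / wc) (deriv γ t / wc) t :=
      (ht.hasDerivAt.sub_const a).div_const wc
    have hrt : (γ t - a) / wc ∈ Metric.closedBall (1:ℂ) (1/2) := by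
      have := himg t
      rw [hrdef] at this
      simp only at this
      rwa [hqeq t ⟨htIoo.1.le, htIoo.2.le⟩] at this
    have hlog : HasDerivAt (fun s => Complex.log ((γ s - a) / wc))
        ((deriv γ t / wc) / ((γ t - a) / wc)) t :=
      hinner.clog_real (Or.inl (by linarith [hre _ hrt]))
    have hg' : HasDerivAt g ((deriv γ t / wc) / ((γ t - a) / wc)) t :=
      hlog.congr_of_eventuallyEq hloc
    rw [hg'.deriv]
    field_simp
  calc (∫ t in c..d, deriv γ t / (γ t - a)) = ∫ t in c..d, deriv g t :=
        (intervalIntegral.integral_congr_ae hgderiv).symm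
    _ = g d - g c := lipFTC hglip hcd
    _ = Complex.log ((γ d - a) / (γ c - a)) := by
        rw [hgdef]
        simp only
        rw [hrdef]
        simp only
        rw [hqeq d ⟨hcd, le_refl d⟩, hqeq c ⟨le_refl c, hcd⟩, div_self hwc0,
          Complex.log_one, sub_zero, hwc]

end Aux

open MeasureTheory Filter intervalIntegral

/-- Proposition: minimal $m_D$-length of non-trivial closed curves.
If $D ⊂ ℂ$ is a bounded proper subdomain, $a ∈ ℂ \setminus D$, and $γ$ is a closed
rectifiable curve in $D$ with nonzero winding number around $a$, then
$∫_γ m_D(z)|dz| ≥ 2π$. -/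
theorem mLength_nontrivial_closed_curve (D : Set ℂ)
    (hDopen : IsOpen D) (hDconn : IsConnected D)
    (hDbdd : Bornology.IsBounded D) (hDproper : D ≠ Set.univ)
    (a : ℂ) (ha : a ∉ D)
    (γ : ℝ → ℂ) (hγlip : ∃ K : NNReal, LipschitzWith K γ)
    (hγclosed : γ 0 = γ 1) (hγin : ∀ t ∈ Set.Icc (0:ℝ) 1, γ t ∈ D)
    (hwind : windingNumber γ a ≠ 0) :
    2 * Real.pi ≤ pathIntegral (mDensity D) γ := by
  obtain ⟨K₀, hK₀⟩ := hγlip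
  set K : NNReal := K₀ + 1 with hKdef
  have hγK : LipschitzWith K γ := hK₀.weaken (le_add_right le_rfl)
  have hK1 : (1:ℝ) ≤ (K:ℝ) := by rw [hKdef]; push_cast; linarith [K₀.coe_nonneg]
  have hKpos : (0:ℝ) < (K:ℝ) := lt_of_lt_of_le one_pos hK1
  have hDne : D.Nonempty := hDconn.nonempty
  have hγcont : Continuous γ := hγK.continuous
  set ψ : ℝ → ℂ := fun t => deriv γ t / (γ t - a) with hψdef
  obtain ⟨t₀, ht₀, hmin₀⟩ := isCompact_Icc.exists_isMinOn (Set.nonempty_Icc.2 zero_le_one)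
    (Continuous.continuousOn (f := fun t => ‖γ t - a‖) (by continuity))
  set ε : ℝ := ‖γ t₀ - a‖ with hεdef
  have hε : 0 < ε := by
    rw [hεdef, norm_pos_iff, sub_ne_zero]
    exact fun h => ha (h ▸ hγin t₀ ht₀)
  have hbnd : ∀ t ∈ Set.Icc (0:ℝ) 1, ε ≤ ‖γ t - a‖ := fun t ht => isMinOn_iff.1 hmin₀ t ht
  have hderivbd : ∀ t, ‖deriv γ t‖ ≤ (K:ℝ) := by
    intro t
    rw [← fderiv_apply_one_eq_deriv]
    calc ‖fderiv ℝ γ t 1‖ ≤ ‖fderiv ℝ γ t‖ * ‖(1:ℝ)‖ := (fderiv ℝ γ t).le_opNorm 1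
      _ ≤ (K:ℝ) := by rw [norm_one, mul_one]; exact norm_fderiv_le_of_lipschitz ℝ hγK
  have hψmeas : Measurable ψ := by
    apply Measurable.div (measurable_deriv γ)
    exact (hγcont.measurable).sub measurable_const
  have hψbd : ∀ t ∈ Set.Icc (0:ℝ) 1, ‖ψ t‖ ≤ (K:ℝ)/ε := by
    intro t ht
    rw [hψdef]
    simp only
    rw [norm_div]
    exact div_le_div₀ K.coe_nonneg (hderivbd t) hε (hbnd t ht)
  have hψint : IntervalIntegrable ψ volume 0 1 := by
    rw [intervalIntegrable_iff_integrableOn_Ioc_of_le zero_le_one]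
    apply Measure.integrableOn_of_bounded (measure_Ioc_lt_top.ne)
      hψmeas.aestronglyMeasurable (M := (K:ℝ)/ε)
    rw [ae_restrict_iff' measurableSet_Ioc]
    exact Eventually.of_forall fun t ht => hψbd t ⟨ht.1.le, ht.2⟩
  -- subdivision
  obtain ⟨n, hn⟩ := exists_nat_gt (2*(K:ℝ)/ε)
  have hn0 : 0 < (n:ℝ) := lt_trans (by positivity) hn
  set p : ℕ → ℝ := fun k => (k:ℝ)/n with hpdef
  have hpmono : ∀ k : ℕ, p k ≤ p (k+1) := by
    intro k
    rw [hpdef]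
    simp only
    gcongr
    · push_cast; linarith
  have hpmem : ∀ k ≤ n, p k ∈ Set.Icc (0:ℝ) 1 := by
    intro k hk
    rw [hpdef]
    constructor
    · positivity
    · rw [div_le_one hn0]; exact_mod_cast hk
  have hgap : ∀ k : ℕ, p (k+1) - p k = 1/(n:ℝ) := by
    intro k
    rw [hpdef]
    push_cast
    field_simp
    ring
  have hsmall : ∀ k : ℕ, (K:ℝ) * (p (k+1) - p k) ≤ ε/2 := by
    intro k
    rw [hgap k, mul_one_div, div_le_div_iff₀ hn0 two_pos]
    have h2K : 2*(K:ℝ) < (n:ℝ) * ε := (div_lt_iff₀ hε).1 hn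
    linarith
  have hp0 : p 0 = 0 := by rw [hpdef]; simp
  have hpn : p n = 1 := by rw [hpdef]; exact div_self hn0.ne'
  set w : ℕ → ℂ := fun k => γ (p k) - a with hwdef
  have hwne : ∀ k ≤ n, w k ≠ 0 := by
    intro k hk h
    have := hbnd (p k) (hpmem k hk)
    rw [hwdef] at h
    simp only at h
    rw [h] at this
    simp at this
    linarith
  have hpieceInt : ∀ k < n, IntervalIntegrable ψ volume (p k) (p (k+1)) := by
    intro k hk
    apply hψint.mono_set
    apply Set.uIcc_subset_uIcc
    · rw [Set.uIcc_of_le zero_le_one]; exact hpmem k hk.le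
    · rw [Set.uIcc_of_le zero_le_one]; exact hpmem (k+1) hk
  have hpiece : ∀ k < n, (∫ t in (p k)..(p (k+1)), ψ t) = Complex.log (w (k+1) / w k) := by
    intro k hk
    apply seg_log hγK hε (hpmono k) ?_ (hsmall k)
    intro t ht
    apply hbnd t
    constructor
    · exact le_trans (hpmem k hk.le).1 ht.1
    · exact le_trans ht.2 (hpmem (k+1) hk).2
  set I : ℂ := ∫ t in (0:ℝ)..1, ψ t with hIdef
  have hIsum : I = ∑ k ∈ Finset.range n, Complex.log (w (k+1) / w k) := by
    have hs := intervalIntegral.sum_integral_adjacent_intervals hpieceInt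
    rw [hp0, hpn] at hs
    rw [hIdef, ← hs]
    exact Finset.sum_congr rfl fun k hk => hpiece k (Finset.mem_range.1 hk)
  have hexpI : Complex.exp I = 1 := by
    rw [hIsum, Complex.exp_sum]
    have hprod : ∀ k ∈ Finset.range n, Complex.exp (Complex.log (w (k+1) / w k))
        = w (k+1) / w k := fun k hk =>
      Complex.exp_log (div_ne_zero (hwne (k+1) (Finset.mem_range.1 hk))
        (hwne k (Finset.mem_range.1 hk).le))
    rw [Finset.prod_congr rfl hprod]
    have htel : ∀ m, m ≤ n → (∏ k ∈ Finset.range m, (w (k+1) / w k)) = w m / w 0 := by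
      intro m
      induction m with
      | zero => intro _; rw [Finset.range_zero, Finset.prod_empty,
          div_self (hwne 0 (Nat.zero_le n))]
      | succ m ih =>
        intro hm
        rw [Finset.prod_range_succ, ih (Nat.le_of_succ_le hm)]
        have h1 := hwne m (Nat.le_of_succ_le hm)
        have h2 := hwne 0 (Nat.zero_le n)
        field_simp
    rw [htel n le_rfl]
    have hweq : w n = w 0 := by
      rw [hwdef]
      simp only
      rw [hp0, hpn, hγclosed]
    rw [hweq, div_self (hwne 0 (Nat.zero_le n))]
  obtain ⟨m, hm⟩ := Complex.exp_eq_one_iff.1 hexpI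
  have hm0 : m ≠ 0 := by
    intro h
    apply hwind
    have hI0 : I = 0 := by rw [hm, h]; simp
    unfold windingNumber
    rw [show (∫ t in (0:ℝ)..1, deriv γ t / (γ t - a)) = I from rfl, hI0, mul_zero]
  have hnormI : 2 * Real.pi ≤ ‖I‖ := by
    rw [hm, norm_mul]
    have h1 : (1:ℝ) ≤ ‖(m:ℂ)‖ := by
      rw [Complex.norm_intCast]
      have := Int.one_le_abs hm0
      exact_mod_cast this
    have h2 : ‖(2 * (Real.pi:ℂ) * Complex.I : ℂ)‖ = 2 * Real.pi := by
      rw [norm_mul, norm_mul, Complex.norm_I, mul_one, Complex.norm_ofNat,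
        Complex.norm_real, Real.norm_eq_abs, abs_of_pos Real.pi_pos]
    rw [h2]
    nlinarith [Real.pi_pos]
  -- lower bound for mDensity integrand and integrability
  obtain ⟨t₁, ht₁, hmin₁⟩ := isCompact_Icc.exists_isMinOn (Set.nonempty_Icc.2 zero_le_one)
    (Continuous.continuousOn (f := fun t => bdist D (γ t))
      ((Metric.continuous_infDist_pt (frontier D)).comp hγcont))
  set δ₀ : ℝ := bdist D (γ t₁) with hδ₀def
  have hδ₀pos : 0 < δ₀ := (bdist_facts hDopen hDne hDproper hDbdd (hγin t₁ ht₁)).1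
  have hδ₀le : ∀ t ∈ Set.Icc (0:ℝ) 1, δ₀ ≤ bdist D (γ t) := fun t ht => isMinOn_iff.1 hmin₁ t ht
  have hmDbounds : ∀ t ∈ Set.Icc (0:ℝ) 1,
      0 ≤ mDensity D (γ t) ∧ mDensity D (γ t) ≤ 2/δ₀ := by
    intro t ht
    obtain ⟨hδpos, hδdiam⟩ := bdist_facts hDopen hDne hDproper hDbdd (hγin t ht)
    set δ := bdist D (γ t)
    set d := Metric.diam D
    have hd0 : 0 < d := lt_of_lt_of_le (by linarith) hδdiam
    constructor
    · apply div_nonneg hd0.le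
      apply mul_nonneg hδpos.le
      linarith
    · rw [mDensity]
      have hden : δ₀ * (d/2) ≤ δ * (d - δ) := by
        apply mul_le_mul (hδ₀le t ht) (by linarith) (by linarith) hδpos.le
      calc d / (δ * (d - δ)) ≤ d / (δ₀ * (d/2)) := by
            apply div_le_div_of_nonneg_left hd0.le (by positivity) hden
        _ = 2/δ₀ := by field_simp
  have hMmeas : Measurable (fun t => mDensity D (γ t) * ‖deriv γ t‖) := by
    have hb : Continuous (fun t => bdist D (γ t)) :=
      (Metric.continuous_infDist_pt (frontier D)).comp hγcont
    have h1 : Measurable (fun t => mDensity D (γ t)) := by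
      simp only [mDensity]
      exact Measurable.div measurable_const
        (hb.measurable.mul ((continuous_const.sub hb).measurable))
    exact h1.mul (measurable_deriv γ).norm
  have hMint : IntervalIntegrable (fun t => mDensity D (γ t) * ‖deriv γ t‖) volume 0 1 := by
    rw [intervalIntegrable_iff_integrableOn_Ioc_of_le zero_le_one]
    apply Measure.integrableOn_of_bounded (measure_Ioc_lt_top.ne)
      hMmeas.aestronglyMeasurable (M := (2/δ₀) * (K:ℝ))
    rw [ae_restrict_iff' measurableSet_Ioc]
    refine Eventually.of_forall fun t ht => ?_
    have htIcc : t ∈ Set.Icc (0:ℝ) 1 := ⟨ht.1.le, ht.2⟩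
    obtain ⟨hnn, hub⟩ := hmDbounds t htIcc
    rw [Real.norm_eq_abs, abs_of_nonneg (mul_nonneg hnn (norm_nonneg _))]
    exact mul_le_mul hub (hderivbd t) (norm_nonneg _) (by positivity)
  have hchain1 : ‖I‖ ≤ ∫ t in (0:ℝ)..1, ‖ψ t‖ :=
    intervalIntegral.norm_integral_le_integral_norm zero_le_one
  have hchain2 : (∫ t in (0:ℝ)..1, ‖ψ t‖) ≤ ∫ t in (0:ℝ)..1, mDensity D (γ t) * ‖deriv γ t‖ := by
    apply intervalIntegral.integral_mono_on zero_le_one hψint.norm hMint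
    intro t ht
    have hge := mDensity_ge hDopen hDne hDproper hDbdd (hγin t ht) ha
    have hdist : dist (γ t) a = ‖γ t - a‖ := by rw [Complex.dist_eq]
    rw [hdist] at hge
    calc ‖ψ t‖ = ‖deriv γ t‖ * (1 / ‖γ t - a‖) := by
          rw [hψdef]; simp only; rw [norm_div]; ring
      _ ≤ ‖deriv γ t‖ * mDensity D (γ t) := mul_le_mul_of_nonneg_left hge (norm_nonneg _)
      _ = mDensity D (γ t) * ‖deriv γ t‖ := mul_comm _ _
  unfold pathIntegral
  calc 2*Real.pi ≤ ‖I‖ := hnormI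
    _ ≤ _ := hchain1.trans hchain2
end
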